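/- arXiv:2004.03596 — 7 statements merged into one kernel-verified Lean document; each statement's English description precedes it below -/
import Mathlib

section
/- For every positive integer n, the number of partitions of n that contain exactly one even part value (which may be repeated any number of times) equals the difference between the total number of parts counted over all partitions of n into odd parts and the total number of parts counted over all partitions of n into distinct parts. -/
/-!
# Euler's Partition Theorem

This file proves Theorem 45 from the [100 Theorems List](https://www.cs.ru.nl/~freek/100/).

The theorem concerns the counting of integer partitions -- ways of
writing a positive integer `n` as a sum of positive integer parts.

Specifically, Euler proved that the number of integer partitions of `n`
into *distinct* parts equals the number of partitions of `n` into *odd*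
parts.

## Proof outline

The proof is based on the generating functions for odd and distinct partitions, which turn out to be
equal:

$$\prod_{i=0}^\infty \frac {1}{1-X^{2i+1}} = \prod_{i=0}^\infty (1+X^{i+1})$$

In fact, we do not take a limit: it turns out that comparing the `n`'th coefficients of the partial
products up to `m := n + 1` is sufficient.

In particular, we

1. define the partial product for the generating function for odd partitions `partialOddGF m` :=
  $$\prod_{i=0}^m \frac {1}{1-X^{2i+1}}$$;
2. prove `oddGF_prop`: if `m` is big enough (`m * 2 > n`), the partial product's coefficient counts
  the number of odd partitions;
3. define the partial product for the generating function for distinct partitions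
  `partialDistinctGF m` := $$\prod_{i=0}^m (1+X^{i+1})$$;
4. prove `distinctGF_prop`: if `m` is big enough (`m + 1 > n`), the `n`th coefficient of the
  partial product counts the number of distinct partitions of `n`;
5. prove `same_coeffs`: if m is big enough (`m ≥ n`), the `n`th coefficient of the partial products
  are equal;
6. combine the above in `partition_theorem`.

## References
https://en.wikipedia.org/wiki/Partition_(number_theory)#Odd_parts_and_distinct_parts
-/


open PowerSeries

namespace Theorems100

noncomputable section

variable {α : Type*}

open Finset

open scoped Classical

/-- The partial product for the generating function for odd partitions.
TODO: As `m` tends to infinity, this converges (in the `X`-adic topology).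

If `m` is sufficiently large, the `i`th coefficient gives the number of odd partitions of the
natural number `i`: proved in `oddGF_prop`.
It is stated for an arbitrary field `α`, though it usually suffices to use `ℚ` or `ℝ`.
-/
def partialOddGF (m : ℕ) [Field α] :=
  ∏ i ∈ range m, (1 - (X : PowerSeries α) ^ (2 * i + 1))⁻¹

/-- The partial product for the generating function for distinct partitions.
TODO: As `m` tends to infinity, this converges (in the `X`-adic topology).

If `m` is sufficiently large, the `i`th coefficient gives the number of distinct partitions of the
natural number `i`: proved in `distinctGF_prop`.
It is stated for an arbitrary commutative semiring `α`, though it usually suffices to use `ℕ`, `ℚ`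
or `ℝ`.
-/
def partialDistinctGF (m : ℕ) [CommSemiring α] :=
  ∏ i ∈ range m, (1 + (X : PowerSeries α) ^ (i + 1))

open Finset.HasAntidiagonal

universe u
variable {ι : Type u}

/-- A convenience constructor for the power series whose coefficients indicate a subset. -/
def indicatorSeries (α : Type*) [Semiring α] (s : Set ℕ) : PowerSeries α :=
  PowerSeries.mk fun n => if n ∈ s then 1 else 0

theorem coeff_indicator (s : Set ℕ) [Semiring α] (n : ℕ) :
    coeff (R := α) n (indicatorSeries _ s) = if n ∈ s then 1 else 0 :=
  coeff_mk _ _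

theorem coeff_indicator_pos (s : Set ℕ) [Semiring α] (n : ℕ) (h : n ∈ s) :
    coeff (R := α) n (indicatorSeries _ s) = 1 := by rw [coeff_indicator, if_pos h]

theorem coeff_indicator_neg (s : Set ℕ) [Semiring α] (n : ℕ) (h : n ∉ s) :
    coeff (R := α) n (indicatorSeries _ s) = 0 := by rw [coeff_indicator, if_neg h]

theorem constantCoeff_indicator (s : Set ℕ) [Semiring α] :
    constantCoeff (R := α) (indicatorSeries _ s) = if 0 ∈ s then 1 else 0 :=
  rfl

theorem two_series (i : ℕ) [Semiring α] :
    1 + (X : PowerSeries α) ^ i.succ = indicatorSeries α {0, i.succ} := by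
  ext n
  simp only [coeff_indicator, coeff_one, coeff_X_pow, Set.mem_insert_iff, Set.mem_singleton_iff,
    map_add]
  cases' n with d
  · simp [(Nat.succ_ne_zero i).symm]
  · simp [Nat.succ_ne_zero d]

theorem num_series' [Field α] (i : ℕ) :
    (1 - (X : PowerSeries α) ^ (i + 1))⁻¹ = indicatorSeries α {k | i + 1 ∣ k} := by
  rw [PowerSeries.inv_eq_iff_mul_eq_one]
  · ext n
    cases n with
    | zero => simp [mul_sub, zero_pow, constantCoeff_indicator]
    | succ n =>
      simp only [coeff_one, if_false, mul_sub, mul_one, coeff_indicator,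
        LinearMap.map_sub, reduceCtorEq]
      simp_rw [coeff_mul, coeff_X_pow, coeff_indicator, @boole_mul _ _ _ _]
      rw [@sum_ite _ _ _ _ _ (fun _ => Classical.propDecidable _), sum_ite]
      simp_rw [@filter_filter _ _ _ _ _, sum_const_zero, add_zero, sum_const, nsmul_eq_mul, mul_one,
        sub_eq_iff_eq_add, zero_add]
      symm
      split_ifs with h
      · suffices #{a ∈ antidiagonal (n + 1) | i + 1 ∣ a.fst ∧ a.snd = i + 1} = 1 by
          simp only [Set.mem_setOf_eq]; convert congr_arg ((↑) : ℕ → α) this; norm_cast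
        rw [card_eq_one]
        cases' h with p hp
        refine ⟨((i + 1) * (p - 1), i + 1), ?_⟩
        ext ⟨a₁, a₂⟩
        simp only [mem_filter, Prod.mk_inj, HasAntidiagonal.mem_antidiagonal, mem_singleton]
        constructor
        · rintro ⟨a_left, ⟨a, rfl⟩, rfl⟩
          refine ⟨?_, rfl⟩
          rw [Nat.mul_sub_left_distrib, ← hp, ← a_left, mul_one, Nat.add_sub_cancel]
        · rintro ⟨rfl, rfl⟩
          match p with
          | 0 => rw [mul_zero] at hp; cases hp
          | p + 1 => rw [hp]; simp [mul_add]
      · suffices #{a ∈ antidiagonal (n + 1) | i + 1 ∣ a.fst ∧ a.snd = i + 1} = 0 by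
          simp only [Set.mem_setOf_eq]; convert congr_arg ((↑) : ℕ → α) this; norm_cast
        rw [card_eq_zero]
        apply eq_empty_of_forall_notMem
        simp only [Prod.forall, mem_filter, not_and, HasAntidiagonal.mem_antidiagonal]
        rintro _ h₁ h₂ ⟨a, rfl⟩ rfl
        apply h
        simp [← h₂]
  · simp [zero_pow]

def mkOdd : ℕ ↪ ℕ :=
  ⟨fun i => 2 * i + 1, fun x y h => by linarith⟩

-- The main workhorse of the partition theorem proof.
theorem partialGF_prop (α : Type*) [CommSemiring α] (n : ℕ) (s : Finset ℕ) (hs : ∀ i ∈ s, 0 < i)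
    (c : ℕ → Set ℕ) (hc : ∀ i, i ∉ s → 0 ∈ c i) :
    #{p : n.Partition | (∀ j, p.parts.count j ∈ c j) ∧ ∀ j ∈ p.parts, j ∈ s} =
      coeff (R := α) n (∏ i ∈ s, indicatorSeries α ((· * i) '' c i)) := by
  simp_rw [coeff_prod, coeff_indicator, prod_boole, sum_boole]
  apply congr_arg
  simp only [mem_univ, forall_true_left, not_and, not_forall, exists_prop,
    Set.mem_image, not_exists]
  set φ : (a : Nat.Partition n) →
    a ∈ filter (fun p ↦ (∀ (j : ℕ), Multiset.count j p.parts ∈ c j) ∧ ∀ j ∈ p.parts, j ∈ s) univ →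
    ℕ →₀ ℕ := fun p _ => {
      toFun := fun i => Multiset.count i p.parts • i
      support := Finset.filter (fun i => i ≠ 0) p.parts.toFinset
      mem_support_toFun := fun a => by
        simp only [smul_eq_mul, ne_eq, mul_eq_zero, Multiset.count_eq_zero]
        rw [not_or, not_not]
        simp only [Multiset.mem_toFinset, not_not, mem_filter] }
  refine Finset.card_bij φ ?_ ?_ ?_
  · intro a ha
    simp only [φ, not_forall, not_exists, not_and, exists_prop, mem_filter]
    rw [mem_finsuppAntidiag]
    dsimp only [ne_eq, smul_eq_mul, id_eq, eq_mpr_eq_cast, le_eq_subset, Finsupp.coe_mk]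
    simp only [mem_univ, forall_true_left, not_and, not_forall, exists_prop,
      mem_filter, true_and] at ha
    refine ⟨⟨?_, fun i ↦ ?_⟩, fun i _ ↦ ⟨a.parts.count i, ha.1 i, rfl⟩⟩
    · conv_rhs => simp [← a.parts_sum]
      rw [sum_multiset_count_of_subset _ s]
      · simp only [smul_eq_mul]
      · intro i
        simp only [Multiset.mem_toFinset, not_not, mem_filter]
        apply ha.2
    · simp only [ne_eq, Multiset.mem_toFinset, not_not, mem_filter, and_imp]
      exact fun hi _ ↦ ha.2 i hi
  · intro p₁ hp₁ p₂ hp₂ h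
    apply Nat.Partition.ext
    simp only [true_and, mem_univ, mem_filter] at hp₁ hp₂
    ext i
    simp only [φ, ne_eq, Multiset.mem_toFinset, not_not, smul_eq_mul, Finsupp.mk.injEq] at h
    by_cases hi : i = 0
    · rw [hi]
      rw [Multiset.count_eq_zero_of_notMem]
      · rw [Multiset.count_eq_zero_of_notMem]
        intro a; exact Nat.lt_irrefl 0 (hs 0 (hp₂.2 0 a))
      intro a; exact Nat.lt_irrefl 0 (hs 0 (hp₁.2 0 a))
    · rw [← mul_left_inj' hi]
      rw [funext_iff] at h
      exact h.2 i
  · simp only [φ, mem_filter, mem_finsuppAntidiag, mem_univ, exists_prop, true_and, and_assoc]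
    rintro f ⟨hf, hf₃, hf₄⟩
    have hf' : f ∈ finsuppAntidiag s n := mem_finsuppAntidiag.mpr ⟨hf, hf₃⟩
    simp only [mem_finsuppAntidiag] at hf'
    refine ⟨⟨∑ i ∈ s, Multiset.replicate (f i / i) i, ?_, ?_⟩, ?_, ?_, ?_⟩
    · intro i hi
      simp only [exists_prop, Multiset.mem_sum, mem_map, Function.Embedding.coeFn_mk] at hi
      rcases hi with ⟨t, ht, z⟩
      apply hs
      rwa [Multiset.eq_of_mem_replicate z]
    · simp_rw [Multiset.sum_sum, Multiset.sum_replicate, Nat.nsmul_eq_mul]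
      rw [← hf'.1]
      refine sum_congr rfl fun i hi => Nat.div_mul_cancel ?_
      rcases hf₄ i hi with ⟨w, _, hw₂⟩
      rw [← hw₂]
      exact dvd_mul_left _ _
    · intro i
      simp_rw [Multiset.count_sum', Multiset.count_replicate, sum_ite_eq']
      split_ifs with h
      · rcases hf₄ i h with ⟨w, hw₁, hw₂⟩
        rwa [← hw₂, Nat.mul_div_cancel _ (hs i h)]
      · exact hc _ h
    · intro i hi
      rw [Multiset.mem_sum] at hi
      rcases hi with ⟨j, hj₁, hj₂⟩
      rwa [Multiset.eq_of_mem_replicate hj₂]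
    · ext i
      simp_rw [Multiset.count_sum', Multiset.count_replicate, sum_ite_eq']
      simp only [ne_eq, Multiset.mem_toFinset, not_not, smul_eq_mul, ite_mul,
        zero_mul, Finsupp.coe_mk]
      split_ifs with h
      · apply Nat.div_mul_cancel
        rcases hf₄ i h with ⟨w, _, hw₂⟩
        apply Dvd.intro_left _ hw₂
      · apply symm
        rw [← Finsupp.notMem_support_iff]
        exact notMem_mono hf'.2 h

theorem partialOddGF_prop [Field α] (n m : ℕ) :
    #{p : n.Partition | ∀ j ∈ p.parts, j ∈ (range m).map mkOdd} = coeff (R := α) n (partialOddGF m) := by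
  rw [partialOddGF]
  convert partialGF_prop α n
    ((range m).map mkOdd) _ (fun _ => Set.univ) (fun _ _ => trivial) using 2
  · congr
    simp only [true_and, forall_const, Set.mem_univ]
  · rw [Finset.prod_map]
    simp_rw [num_series']
    congr! 2 with x
    ext k
    constructor
    · rintro ⟨p, rfl⟩
      refine ⟨p, ⟨⟩, ?_⟩
      apply mul_comm
    rintro ⟨a_w, -, rfl⟩
    apply Dvd.intro_left a_w rfl
  · intro i
    rw [mem_map]
    rintro ⟨a, -, rfl⟩
    exact Nat.succ_pos _

/-- If m is big enough, the partial product's coefficient counts the number of odd partitions -/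
theorem oddGF_prop [Field α] (n m : ℕ) (h : n < m * 2) :
    #(Nat.Partition.odds n) = coeff (R := α) n (partialOddGF m) := by
  rw [← partialOddGF_prop, Nat.Partition.odds, Nat.Partition.restricted]
  congr with p
  apply forall₂_congr
  intro i hi
  have hin : i ≤ n := by
    simpa [p.parts_sum] using Multiset.single_le_sum (fun _ _ => Nat.zero_le _) _ hi
  simp only [mkOdd, exists_prop, mem_range, Function.Embedding.coeFn_mk, mem_map]
  constructor
  · intro hi₂
    have := Nat.mod_add_div i 2
    rw [Nat.not_even_iff] at hi₂
    rw [hi₂, add_comm] at this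
    refine ⟨i / 2, ?_, this⟩
    rw [Nat.div_lt_iff_lt_mul zero_lt_two]
    exact lt_of_le_of_lt hin h
  · rintro ⟨a, -, rfl⟩
    rw [even_iff_two_dvd]
    apply Nat.two_not_dvd_two_mul_add_one

theorem partialDistinctGF_prop [CommSemiring α] (n m : ℕ) :
    #{p : n.Partition |
        p.parts.Nodup ∧ ∀ j ∈ p.parts, j ∈ (range m).map ⟨Nat.succ, Nat.succ_injective⟩} =
      coeff (R := α) n (partialDistinctGF m) := by
  rw [partialDistinctGF]
  convert partialGF_prop α n
    ((range m).map ⟨Nat.succ, Nat.succ_injective⟩) _ (fun _ => {0, 1}) (fun _ _ => Or.inl rfl)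
    using 2
  · congr! with p
    rw [Multiset.nodup_iff_count_le_one]
    congr! 1 with i
    rcases Multiset.count i p.parts with (_ | _ | ms) <;> simp
  · simp_rw [Finset.prod_map, two_series]
    congr with i
    simp [Set.image_pair]
  · simp only [mem_map, Function.Embedding.coeFn_mk]
    rintro i ⟨_, _, rfl⟩
    apply Nat.succ_pos

/-- If m is big enough, the partial product's coefficient counts the number of distinct partitions
-/
theorem distinctGF_prop [CommSemiring α] (n m : ℕ) (h : n < m + 1) :
    #(Nat.Partition.distincts n) = coeff (R := α) n (partialDistinctGF m) := by
  rw [← partialDistinctGF_prop, Nat.Partition.distincts]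
  congr with p
  apply (and_iff_left _).symm
  intro i hi
  have : i ≤ n := by
    simpa [p.parts_sum] using Multiset.single_le_sum (fun _ _ => Nat.zero_le _) _ hi
  simp only [mkOdd, exists_prop, mem_range, Function.Embedding.coeFn_mk, mem_map]
  refine ⟨i - 1, ?_, Nat.succ_pred_eq_of_pos (p.parts_pos hi)⟩
  rw [tsub_lt_iff_right (Nat.one_le_iff_ne_zero.mpr (p.parts_pos hi).ne')]
  exact lt_of_le_of_lt this h

/-- The key proof idea for the partition theorem, showing that the generating functions for both
sequences are ultimately the same (since the factor converges to 0 as m tends to infinity).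
It's enough to not take the limit though, and just consider large enough `m`.
-/
theorem same_gf [Field α] (m : ℕ) :
    (partialOddGF m * (range m).prod fun i => 1 - (X : PowerSeries α) ^ (m + i + 1)) =
      partialDistinctGF m := by
  rw [partialOddGF, partialDistinctGF]
  induction' m with m ih
  · simp
  set! π₀ : PowerSeries α := ∏ i ∈ range m, (1 - X ^ (m + 1 + i + 1)) with hπ₀
  set! π₁ : PowerSeries α := ∏ i ∈ range m, (1 - X ^ (2 * i + 1))⁻¹ with hπ₁
  set! π₂ : PowerSeries α := ∏ i ∈ range m, (1 - X ^ (m + i + 1)) with hπ₂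
  set! π₃ : PowerSeries α := ∏ i ∈ range m, (1 + X ^ (i + 1)) with hπ₃
  rw [← hπ₃] at ih
  have h : constantCoeff (R := α) (1 - X ^ (2 * m + 1)) ≠ 0 := by
    rw [RingHom.map_sub, RingHom.map_pow, constantCoeff_one, constantCoeff_X,
      zero_pow (2 * m).succ_ne_zero, sub_zero]
    exact one_ne_zero
  calc
    (∏ i ∈ range (m + 1), (1 - X ^ (2 * i + 1))⁻¹) *
          ∏ i ∈ range (m + 1), (1 - X ^ (m + 1 + i + 1)) =
        π₁ * (1 - X ^ (2 * m + 1))⁻¹ * (π₀ * (1 - X ^ (m + 1 + m + 1))) := by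
      rw [prod_range_succ _ m, ← hπ₁, prod_range_succ _ m, ← hπ₀]
    _ = π₁ * (1 - X ^ (2 * m + 1))⁻¹ * (π₀ * ((1 + X ^ (m + 1)) * (1 - X ^ (m + 1)))) := by
      rw [← sq_sub_sq, one_pow, add_assoc _ m 1, ← two_mul (m + 1), pow_mul']
    _ = π₀ * (1 - X ^ (m + 1)) * (1 - X ^ (2 * m + 1))⁻¹ * (π₁ * (1 + X ^ (m + 1))) := by ring
    _ =
        (∏ i ∈ range (m + 1), (1 - X ^ (m + 1 + i))) * (1 - X ^ (2 * m + 1))⁻¹ *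
          (π₁ * (1 + X ^ (m + 1))) := by
      rw [prod_range_succ', add_zero, hπ₀]; simp_rw [← add_assoc]
    _ = π₂ * (1 - X ^ (m + 1 + m)) * (1 - X ^ (2 * m + 1))⁻¹ * (π₁ * (1 + X ^ (m + 1))) := by
      rw [add_right_comm, hπ₂, ← prod_range_succ]; simp_rw [add_right_comm]
    _ = π₂ * (1 - X ^ (2 * m + 1)) * (1 - X ^ (2 * m + 1))⁻¹ * (π₁ * (1 + X ^ (m + 1))) := by
      rw [two_mul, add_right_comm _ m 1]
    _ = (1 - X ^ (2 * m + 1)) * (1 - X ^ (2 * m + 1))⁻¹ * π₂ * (π₁ * (1 + X ^ (m + 1))) := by ring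
    _ = π₂ * (π₁ * (1 + X ^ (m + 1))) := by rw [PowerSeries.mul_inv_cancel _ h, one_mul]
    _ = π₁ * π₂ * (1 + X ^ (m + 1)) := by ring
    _ = π₃ * (1 + X ^ (m + 1)) := by rw [ih]
    _ = _ := by rw [prod_range_succ]

theorem same_coeffs [Field α] (m n : ℕ) (h : n ≤ m) :
    coeff (R := α) n (partialOddGF m) = coeff (R := α) n (partialDistinctGF m) := by
  rw [← same_gf, coeff_mul_prod_one_sub_of_lt_order]
  rintro i -
  rw [order_X_pow]
  exact mod_cast Nat.lt_succ_of_le (le_add_right h)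

theorem partition_theorem (n : ℕ) : #(Nat.Partition.odds n) = #(Nat.Partition.distincts n) := by
  suffices (#(Nat.Partition.odds n) : ℚ) = #(Nat.Partition.distincts n) from
    mod_cast this
  rw [distinctGF_prop n (n + 1) (by linarith)]
  rw [oddGF_prop n (n + 1) (by linarith)]
  apply same_coeffs (n + 1) n n.le_succ

end

end Theorems100


open Finset Multiset Nat.Partition

open scoped Classical

namespace Beck

noncomputable def Podd (n : ℕ) : ℕ := (Nat.Partition.odds n).card
noncomputable def Pdist (n : ℕ) : ℕ := (Nat.Partition.distincts n).card

theorem pdist_eq_podd (n : ℕ) : Pdist n = Podd n :=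
  (Theorems100.partition_theorem n).symm

lemma mem_odds_iff {n : ℕ} (p : n.Partition) :
    p ∈ Nat.Partition.odds n ↔ ∀ i ∈ p.parts, ¬Even i := by
  simp [Nat.Partition.odds, Nat.Partition.restricted]

lemma mem_distincts_iff {n : ℕ} (p : n.Partition) :
    p ∈ Nat.Partition.distincts n ↔ p.parts.Nodup := by
  simp [Nat.Partition.distincts]

lemma sum_le_of_le {s t : Multiset ℕ} (h : s ≤ t) : s.sum ≤ t.sum := by
  obtain ⟨u, rfl⟩ := Multiset.le_iff_exists_add.1 h
  simp

lemma part_le {n : ℕ} (p : n.Partition) {i : ℕ} (hi : i ∈ p.parts) : i ≤ n :=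
  (Multiset.le_sum_of_mem hi).trans_eq p.parts_sum

lemma card_le_sum' (s : Multiset ℕ) (h : ∀ i ∈ s, 0 < i) : Multiset.card s ≤ s.sum := by
  induction s using Multiset.induction with
  | empty => simp
  | cons a s ih =>
    have h1 := h a (Multiset.mem_cons_self a s)
    have h2 := ih fun i hi => h i (Multiset.mem_cons_of_mem hi)
    simp only [Multiset.card_cons, Multiset.sum_cons]
    omega

lemma card_parts_le {n : ℕ} (p : n.Partition) : Multiset.card p.parts ≤ n := by
  exact (card_le_sum' p.parts fun _ hi => p.parts_pos hi).trans_eq p.parts_sum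

/-- adding `t` copies of `j` to a partition of `m`. -/
noncomputable def addRep (m j t : ℕ) (hj : 0 < j) (q : m.Partition) : (m + j * t).Partition where
  parts := q.parts + Multiset.replicate t j
  parts_pos := by
    intro i hi
    rcases Multiset.mem_add.1 hi with h | h
    · exact q.parts_pos h
    · rw [Multiset.eq_of_mem_replicate h]; exact hj
  parts_sum := by
    rw [Multiset.sum_add, q.parts_sum, Multiset.sum_replicate, smul_eq_mul, mul_comm]

lemma addRep_inj (m j t : ℕ) (hj : 0 < j) : Function.Injective (addRep m j t hj) := by
  intro a b hab
  apply Nat.Partition.ext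
  have := congrArg Nat.Partition.parts hab
  simpa [addRep] using this

lemma L1bij (m j t : ℕ) (hj : ¬ Even j) (ht : 0 < t) :
    ((Nat.Partition.odds (m + j * t)).filter fun p => t ≤ p.parts.count j).card = Podd m := by
  have hj0 : 0 < j := Nat.pos_of_ne_zero (by rintro rfl; exact hj Even.zero)
  rw [Podd]
  symm
  apply Finset.card_bij (fun q _ => addRep m j t hj0 q)
  · intro q hq
    rw [Finset.mem_filter]
    constructor
    · rw [mem_odds_iff]
      intro i hi
      rcases Multiset.mem_add.1 hi with h | h
      · exact (mem_odds_iff q).1 hq i h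
      · rw [Multiset.eq_of_mem_replicate h]; exact hj
    · show t ≤ Multiset.count j (q.parts + Multiset.replicate t j)
      simp [Multiset.count_replicate]
  · intro a _ b _ hab
    exact addRep_inj m j t hj0 hab
  · intro p hp
    rw [Finset.mem_filter] at hp
    obtain ⟨hpo, hpc⟩ := hp
    have hle : Multiset.replicate t j ≤ p.parts := Multiset.le_count_iff_replicate_le.1 hpc
    have hsum : (p.parts - Multiset.replicate t j).sum = m := by
      have h1 : (p.parts - Multiset.replicate t j) + Multiset.replicate t j = p.parts :=
        tsub_add_cancel_of_le hle
      have h2 := congrArg Multiset.sum h1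
      rw [Multiset.sum_add, Multiset.sum_replicate, smul_eq_mul, p.parts_sum] at h2
      have : t * j = j * t := mul_comm t j
      omega
    refine ⟨⟨p.parts - Multiset.replicate t j, ?_, hsum⟩, ?_, ?_⟩
    · intro i hi
      exact p.parts_pos (Multiset.mem_of_le (Multiset.sub_le_self _ _) hi)
    · rw [mem_odds_iff]
      intro i hi
      exact (mem_odds_iff p).1 hpo i (Multiset.mem_of_le (Multiset.sub_le_self _ _) hi)
    · apply Nat.Partition.ext
      show (p.parts - Multiset.replicate t j) + Multiset.replicate t j = p.parts
      exact tsub_add_cancel_of_le hle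

lemma L2bij (m e t : ℕ) (he : Even e) (he0 : 0 < e) (ht : 0 < t) :
    (Finset.univ.filter fun p : (m + e * t).Partition =>
      p.parts.filter (fun i => Even i) = Multiset.replicate t e).card = Podd m := by
  rw [Podd]
  symm
  apply Finset.card_bij (fun q _ => addRep m e t he0 q)
  · intro q hq
    rw [Finset.mem_filter]
    refine ⟨Finset.mem_univ _, ?_⟩
    show (q.parts + Multiset.replicate t e).filter (fun i => Even i) = Multiset.replicate t e
    rw [Multiset.filter_add]
    rw [Multiset.filter_eq_nil.2 ((mem_odds_iff q).1 hq), Multiset.filter_eq_self.2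
      (fun b hb => (Multiset.eq_of_mem_replicate hb) ▸ he), zero_add]
  · intro a _ b _ hab
    exact addRep_inj m e t he0 hab
  · intro p hp
    rw [Finset.mem_filter] at hp
    obtain ⟨-, hpf⟩ := hp
    have key := Multiset.filter_add_not (fun i => Even i) p.parts
    have hsum : (p.parts.filter (fun i => ¬ Even i)).sum = m := by
      have h2 := congrArg Multiset.sum key
      rw [Multiset.sum_add, hpf, Multiset.sum_replicate, smul_eq_mul, p.parts_sum] at h2
      have : t * e = e * t := mul_comm t e
      omega
    refine ⟨⟨p.parts.filter (fun i => ¬ Even i), ?_, hsum⟩, ?_, ?_⟩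
    · intro i hi
      exact p.parts_pos (Multiset.mem_of_mem_filter hi)
    · rw [mem_odds_iff]
      intro i hi
      exact Multiset.of_mem_filter (s := p.parts) (p := fun i => ¬ Even i) hi
    · apply Nat.Partition.ext
      show p.parts.filter (fun i => ¬ Even i) + Multiset.replicate t e = p.parts
      rw [← hpf, add_comm]
      exact key

lemma L3bij (m j : ℕ) (hj0 : 0 < j) :
    ((Nat.Partition.distincts (m + j * 1)).filter fun p => j ∈ p.parts).card
      = ((Nat.Partition.distincts m).filter fun p => j ∉ p.parts).card := by
  symm
  apply Finset.card_bij (fun q _ => addRep m j 1 hj0 q)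
  · intro q hq
    rw [Finset.mem_filter] at hq ⊢
    obtain ⟨hqd, hqn⟩ := hq
    rw [mem_distincts_iff] at hqd
    constructor
    · rw [mem_distincts_iff]
      show (q.parts + Multiset.replicate 1 j).Nodup
      rw [Multiset.replicate_one, add_comm, Multiset.singleton_add, Multiset.nodup_cons]
      exact ⟨hqn, hqd⟩
    · show j ∈ q.parts + Multiset.replicate 1 j
      simp
  · intro a _ b _ hab
    exact addRep_inj m j 1 hj0 hab
  · intro p hp
    rw [Finset.mem_filter, mem_distincts_iff] at hp
    obtain ⟨hpd, hpm⟩ := hp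
    have hle : Multiset.replicate 1 j ≤ p.parts := by
      rw [Multiset.replicate_one]
      exact Multiset.singleton_le.2 hpm
    have hsum : (p.parts - Multiset.replicate 1 j).sum = m := by
      have h1 : (p.parts - Multiset.replicate 1 j) + Multiset.replicate 1 j = p.parts :=
        tsub_add_cancel_of_le hle
      have h2 := congrArg Multiset.sum h1
      rw [Multiset.sum_add, Multiset.sum_replicate, smul_eq_mul, p.parts_sum] at h2
      omega
    refine ⟨⟨p.parts - Multiset.replicate 1 j, ?_, hsum⟩, ?_, ?_⟩
    · intro i hi
      exact p.parts_pos (Multiset.mem_of_le (Multiset.sub_le_self _ _) hi)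
    · rw [Finset.mem_filter, mem_distincts_iff]
      constructor
      · exact Multiset.nodup_of_le (Multiset.sub_le_self _ _) hpd
      · show j ∉ p.parts - Multiset.replicate 1 j
        rw [← Multiset.count_eq_zero, Multiset.count_sub, Multiset.replicate_one,
          Multiset.count_singleton_self]
        have := Multiset.nodup_iff_count_le_one.1 hpd j
        omega
    · apply Nat.Partition.ext
      show (p.parts - Multiset.replicate 1 j) + Multiset.replicate 1 j = p.parts
      exact tsub_add_cancel_of_le hle

lemma card_filter_odds (n j t : ℕ) (ht : 1 ≤ t) :
    ((Nat.Partition.odds n).filter fun p => t ≤ p.parts.count j).card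
      = if ¬Even j ∧ j * t ≤ n then Podd (n - j * t) else 0 := by
  by_cases he : Even j
  · rw [if_neg (by tauto), Finset.card_eq_zero, Finset.filter_eq_empty_iff]
    intro p hp hcnt
    have hmem : j ∈ p.parts := Multiset.count_pos.1 (lt_of_lt_of_le ht hcnt)
    exact (mem_odds_iff p).1 hp j hmem he
  · by_cases hc : j * t ≤ n
    · obtain ⟨m, rfl⟩ : ∃ m, n = m + j * t := ⟨n - j * t, by omega⟩
      rw [if_pos ⟨he, hc⟩]
      have hmm : m + j * t - j * t = m := by omega
      rw [hmm]
      exact L1bij m j t he ht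
    · rw [if_neg (by tauto), Finset.card_eq_zero, Finset.filter_eq_empty_iff]
      intro p _ hcnt
      apply hc
      have hle := Multiset.le_count_iff_replicate_le.1 hcnt
      have hs := sum_le_of_le hle
      rw [Multiset.sum_replicate, smul_eq_mul, p.parts_sum] at hs
      have : t * j = j * t := mul_comm t j
      omega

lemma card_filter_evenclass (n e t : ℕ) (ht : 1 ≤ t) (he0 : 1 ≤ e) :
    (Finset.univ.filter fun p : n.Partition =>
        p.parts.filter (fun i => Even i) = Multiset.replicate t e).card
      = if Even e ∧ e * t ≤ n then Podd (n - e * t) else 0 := by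
  by_cases he : Even e
  · by_cases hc : e * t ≤ n
    · obtain ⟨m, rfl⟩ : ∃ m, n = m + e * t := ⟨n - e * t, by omega⟩
      rw [if_pos ⟨he, hc⟩]
      have hmm : m + e * t - e * t = m := by omega
      rw [hmm]
      exact L2bij m e t he he0 ht
    · rw [if_neg (by tauto), Finset.card_eq_zero, Finset.filter_eq_empty_iff]
      intro p _ hpf
      apply hc
      have hle : Multiset.replicate t e ≤ p.parts := hpf ▸ Multiset.filter_le _ _
      have hs := sum_le_of_le hle
      rw [Multiset.sum_replicate, smul_eq_mul, p.parts_sum] at hs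
      have : t * e = e * t := mul_comm t e
      omega
  · rw [if_neg (by tauto), Finset.card_eq_zero, Finset.filter_eq_empty_iff]
    intro p _ hpf
    have hmem : e ∈ p.parts.filter (fun i => Even i) := by
      rw [hpf]
      exact Multiset.mem_replicate.2 ⟨by omega, rfl⟩
    exact he (Multiset.of_mem_filter hmem)

lemma L3step (m j : ℕ) (hj0 : 0 < j) :
    ((Nat.Partition.distincts (m + j * 1)).filter fun p => j ∈ p.parts).card
      + ((Nat.Partition.distincts m).filter fun p => j ∈ p.parts).card = Pdist m := by
  rw [L3bij m j hj0, add_comm]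
  exact Finset.card_filter_add_card_filter_not (p := fun p : m.Partition => j ∈ p.parts)

lemma fdist_eq (j : ℕ) (hj : 1 ≤ j) (m : ℕ) :
    ((((Nat.Partition.distincts m).filter fun p => j ∈ p.parts).card : ℤ))
      = ∑ t ∈ Finset.Icc 1 (m / j), (-1 : ℤ)^(t+1) * Pdist (m - j*t) := by
  induction m using Nat.strong_induction_on with
  | _ m ih =>
  by_cases hjm : j ≤ m
  · have hm : m - j + j * 1 = m := by omega
    have hstep := L3step (m - j) j hj
    rw [hm] at hstep
    have ihm := ih (m - j) (by omega)
    have hcard : ((((Nat.Partition.distincts m).filter fun p => j ∈ p.parts).card : ℤ))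
        = (Pdist (m - j) : ℤ)
          - (((Nat.Partition.distincts (m - j)).filter fun p => j ∈ p.parts).card : ℤ) := by
      have := congrArg (Nat.cast : ℕ → ℤ) hstep
      push_cast at this
      linarith
    rw [hcard, ihm]
    have hdiv : m / j = (m - j) / j + 1 := by
      rw [Nat.div_eq_sub_div hj hjm]
    rw [hdiv]
    rw [← Finset.Ico_add_one_right_eq_Icc, ← Finset.Ico_add_one_right_eq_Icc, Finset.sum_Ico_eq_sum_range,
      Finset.sum_Ico_eq_sum_range]
    have e1 : (m - j) / j + 1 - 1 = (m - j) / j := by simp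
    have e2 : (m - j) / j + 1 + 1 - 1 = (m - j) / j + 1 := by simp
    rw [e1, e2, Finset.sum_range_succ']
    have hfirst : (-1 : ℤ)^(1 + 0 + 1) * (Pdist (m - j * (1 + 0)) : ℤ) = (Pdist (m - j) : ℤ) := by
      norm_num
    rw [hfirst]
    have hterm : ∀ i ∈ Finset.range ((m - j) / j),
        (-1 : ℤ)^(1 + (i + 1) + 1) * (Pdist (m - j * (1 + (i + 1))) : ℤ)
          = -((-1 : ℤ)^(1 + i + 1) * (Pdist (m - j - j * (1 + i)) : ℤ)) := by
      intro i _
      have harg : m - j - j * (1 + i) = m - j * (1 + (i + 1)) := by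
        have : j * (1 + (i + 1)) = j + j * (1 + i) := by ring
        omega
      rw [← harg]
      ring
    rw [Finset.sum_congr rfl hterm, Finset.sum_neg_distrib]
    ring
  · have h0 : m / j = 0 := Nat.div_eq_of_lt (by omega)
    rw [h0]
    rw [show Finset.Icc 1 0 = (∅ : Finset ℕ) from Finset.Icc_eq_empty (by omega)]
    rw [Finset.sum_empty]
    norm_cast
    rw [Finset.card_eq_zero, Finset.filter_eq_empty_iff]
    intro p _ hpm
    exact hjm (part_le p hpm)

lemma indic {M n : ℕ} (h : M ≤ n) :
    (∑ t ∈ Finset.Icc 1 n, if t ≤ M then 1 else 0) = M := by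
  rw [Finset.sum_boole]
  have hf : (Finset.Icc 1 n).filter (fun t => t ≤ M) = Finset.Icc 1 M := by
    ext t
    simp only [Finset.mem_filter, Finset.mem_Icc]
    omega
  rw [hf]
  simp [Nat.card_Icc]

lemma Bsum (n : ℕ) :
    (∑ p ∈ Nat.Partition.odds n, Multiset.card p.parts)
      = ∑ q ∈ Finset.Icc 1 n ×ˢ Finset.Icc 1 n,
          if ¬Even q.1 ∧ q.1 * q.2 ≤ n then Podd (n - q.1 * q.2) else 0 := by
  have step1 : ∀ p ∈ Nat.Partition.odds n,
      Multiset.card p.parts = ∑ j ∈ Finset.Icc 1 n, p.parts.count j := by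
    intro p _
    rw [← Multiset.toFinset_sum_count_eq p.parts]
    apply Finset.sum_subset
    · intro i hi
      rw [Multiset.mem_toFinset] at hi
      rw [Finset.mem_Icc]
      exact ⟨p.parts_pos hi, part_le p hi⟩
    · intro j _ hj
      rw [Multiset.count_eq_zero]
      exact fun hmem => hj (Multiset.mem_toFinset.2 hmem)
  rw [Finset.sum_congr rfl step1, Finset.sum_comm]
  have step3 : ∀ j ∈ Finset.Icc 1 n, (∑ p ∈ Nat.Partition.odds n, p.parts.count j)
      = ∑ t ∈ Finset.Icc 1 n,
          if ¬Even j ∧ j * t ≤ n then Podd (n - j * t) else 0 := by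
    intro j _
    have per : ∀ p ∈ Nat.Partition.odds n,
        p.parts.count j = ∑ t ∈ Finset.Icc 1 n, if t ≤ p.parts.count j then 1 else 0 := by
      intro p _
      exact (indic ((Multiset.count_le_card j p.parts).trans (card_parts_le p))).symm
    rw [Finset.sum_congr rfl per, Finset.sum_comm]
    apply Finset.sum_congr rfl
    intro t ht
    rw [Finset.sum_boole, Nat.cast_id, card_filter_odds n j t (Finset.mem_Icc.1 ht).1]
  rw [Finset.sum_congr rfl step3, Finset.sum_product]

lemma Csum (n : ℕ) :
    (∑ p ∈ Nat.Partition.distincts n, (Multiset.card p.parts : ℤ))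
      = ∑ q ∈ Finset.Icc 1 n ×ˢ Finset.Icc 1 n,
          if q.1 * q.2 ≤ n then (-1 : ℤ)^(q.2 + 1) * Pdist (n - q.1 * q.2) else 0 := by
  have step1 : ∀ p ∈ Nat.Partition.distincts n, (Multiset.card p.parts : ℤ)
      = ∑ j ∈ Finset.Icc 1 n, if j ∈ p.parts then (1 : ℤ) else 0 := by
    intro p hp
    rw [Finset.sum_boole]
    have hfe : (Finset.Icc 1 n).filter (fun j => j ∈ p.parts) = p.parts.toFinset := by
      ext i
      simp only [Finset.mem_filter, Multiset.mem_toFinset, Finset.mem_Icc]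
      constructor
      · rintro ⟨-, h⟩; exact h
      · intro h; exact ⟨⟨p.parts_pos h, part_le p h⟩, h⟩
    rw [hfe, Multiset.toFinset_card_eq_card_iff_nodup.2 ((mem_distincts_iff p).1 hp)]
  rw [Finset.sum_congr rfl step1, Finset.sum_comm]
  have step2 : ∀ j ∈ Finset.Icc 1 n,
      (∑ p ∈ Nat.Partition.distincts n, if j ∈ p.parts then (1 : ℤ) else 0)
      = ∑ t ∈ Finset.Icc 1 n,
          if j * t ≤ n then (-1 : ℤ)^(t + 1) * Pdist (n - j * t) else 0 := by
    intro j hj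
    have hj1 : 1 ≤ j := (Finset.mem_Icc.1 hj).1
    rw [Finset.sum_boole, fdist_eq j hj1 n, ← Finset.sum_filter]
    apply Finset.sum_congr
    · ext t
      simp only [Finset.mem_filter, Finset.mem_Icc]
      constructor
      · rintro ⟨h1, h2⟩
        have h3 : t * j ≤ n := (Nat.le_div_iff_mul_le (by omega)).1 h2
        have h4 : t ≤ t * j := Nat.le_mul_of_pos_right t (by omega)
        have h5 : j * t = t * j := mul_comm j t
        exact ⟨⟨h1, by omega⟩, by omega⟩
      · rintro ⟨⟨h1, _⟩, h3⟩
        have h5 : j * t = t * j := mul_comm j t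
        exact ⟨h1, (Nat.le_div_iff_mul_le (by omega)).2 (by omega)⟩
    · intros; rfl
  rw [Finset.sum_congr rfl step2, Finset.sum_product]

lemma Asum (n : ℕ) :
    (Finset.univ.filter fun p : n.Partition =>
        (p.parts.toFinset.filter fun i => Even i).card = 1).card
      = ∑ q ∈ Finset.Icc 1 n ×ˢ Finset.Icc 1 n,
          if Even q.1 ∧ q.1 * q.2 ≤ n then Podd (n - q.1 * q.2) else 0 := by
  set φ : n.Partition → ℕ × ℕ := fun p =>
    ((p.parts.filter fun i => Even i).toFinset.sum id,
      Multiset.card (p.parts.filter fun i => Even i)) with hφ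
  have key : ∀ p : n.Partition, (p.parts.toFinset.filter fun i => Even i).card = 1 →
      Even (φ p).1 ∧ 1 ≤ (φ p).1 ∧ 1 ≤ (φ p).2 ∧ (φ p).1 * (φ p).2 ≤ n ∧
        p.parts.filter (fun i => Even i) = Multiset.replicate (φ p).2 (φ p).1 := by
    intro p hp
    rw [← Multiset.toFinset_filter, Finset.card_eq_one] at hp
    obtain ⟨e, he⟩ := hp
    have hφ1 : (φ p).1 = e := by
      show (p.parts.filter fun i => Even i).toFinset.sum id = e
      rw [he, Finset.sum_singleton, id]
    have heF : e ∈ p.parts.filter (fun i => Even i) := by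
      rw [← Multiset.mem_toFinset, he]
      exact Finset.mem_singleton_self e
    have hrep : p.parts.filter (fun i => Even i)
        = Multiset.replicate (φ p).2 (φ p).1 := by
      rw [hφ1]
      apply Multiset.eq_replicate_card.2
      intro b hb
      have hb' : b ∈ (p.parts.filter (fun i => Even i)).toFinset := Multiset.mem_toFinset.2 hb
      rw [he] at hb'
      exact Finset.mem_singleton.1 hb'
    have hEven : Even e := Multiset.of_mem_filter heF
    have heP : e ∈ p.parts := Multiset.mem_of_mem_filter heF
    have he1 : 1 ≤ e := p.parts_pos heP
    have ht1 : 1 ≤ (φ p).2 := by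
      show 1 ≤ Multiset.card (p.parts.filter fun i => Even i)
      rw [Nat.one_le_iff_ne_zero, Ne, Multiset.card_eq_zero]
      intro h0
      rw [h0] at heF
      simp at heF
    have hle : (φ p).1 * (φ p).2 ≤ n := by
      have hsub := sum_le_of_le (Multiset.filter_le (fun i => Even i) p.parts)
      rw [p.parts_sum, hrep, Multiset.sum_replicate, smul_eq_mul] at hsub
      calc (φ p).1 * (φ p).2 = (φ p).2 * (φ p).1 := mul_comm _ _
        _ ≤ n := hsub
    exact ⟨hφ1 ▸ hEven, hφ1 ▸ he1, ht1, hle, hrep⟩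
  have hmap : ∀ p ∈ (Finset.univ.filter fun p : n.Partition =>
      (p.parts.toFinset.filter fun i => Even i).card = 1),
      φ p ∈ (Finset.Icc 1 n ×ˢ Finset.Icc 1 n).filter
        (fun q => Even q.1 ∧ q.1 * q.2 ≤ n) := by
    intro p hp
    rw [Finset.mem_filter] at hp
    obtain ⟨hEven, he1, ht1, hle, _⟩ := key p hp.2
    rw [Finset.mem_filter, Finset.mem_product, Finset.mem_Icc, Finset.mem_Icc]
    have h1 : (φ p).1 ≤ (φ p).1 * (φ p).2 := Nat.le_mul_of_pos_right _ (by omega)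
    have h2 : (φ p).2 ≤ (φ p).1 * (φ p).2 := Nat.le_mul_of_pos_left _ (by omega)
    exact ⟨⟨⟨he1, by omega⟩, ⟨ht1, by omega⟩⟩, hEven, hle⟩
  rw [Finset.card_eq_sum_card_fiberwise hmap]
  have fib : ∀ q ∈ (Finset.Icc 1 n ×ˢ Finset.Icc 1 n).filter
      (fun q => Even q.1 ∧ q.1 * q.2 ≤ n),
      ((Finset.univ.filter fun p : n.Partition =>
          (p.parts.toFinset.filter fun i => Even i).card = 1).filter
        fun p => φ p = q).card = Podd (n - q.1 * q.2) := by
    intro q hq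
    rw [Finset.mem_filter, Finset.mem_product, Finset.mem_Icc, Finset.mem_Icc] at hq
    obtain ⟨⟨⟨he1, _⟩, ⟨ht1, _⟩⟩, hEven, hle⟩ := hq
    have hset : ((Finset.univ.filter fun p : n.Partition =>
          (p.parts.toFinset.filter fun i => Even i).card = 1).filter
        fun p => φ p = q)
        = Finset.univ.filter (fun p : n.Partition =>
            p.parts.filter (fun i => Even i) = Multiset.replicate q.2 q.1) := by
      ext p
      simp only [Finset.mem_filter, Finset.mem_univ, true_and]
      constructor
      · rintro ⟨hp1, hp2⟩
        obtain ⟨_, _, _, _, hrep⟩ := key p hp1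
        rw [hp2] at hrep
        exact hrep
      · intro hrep'
        have hcard1 : (p.parts.toFinset.filter fun i => Even i).card = 1 := by
          rw [← Multiset.toFinset_filter, hrep', Multiset.toFinset_replicate,
            if_neg (by omega)]
          exact Finset.card_singleton _
        refine ⟨hcard1, ?_⟩
        have h1 : (φ p).1 = q.1 := by
          show (p.parts.filter fun i => Even i).toFinset.sum id = q.1
          rw [hrep', Multiset.toFinset_replicate, if_neg (by omega),
            Finset.sum_singleton, id]
        have h2 : (φ p).2 = q.2 := by
          show Multiset.card (p.parts.filter fun i => Even i) = q.2
          rw [hrep', Multiset.card_replicate]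
        exact Prod.ext h1 h2
    rw [hset, card_filter_evenclass n q.1 q.2 ht1 he1, if_pos ⟨hEven, hle⟩]
  rw [Finset.sum_congr rfl fib, Finset.sum_filter]

lemma swap_sum (n : ℕ) (g : ℕ → ℕ → ℤ) :
    ∑ q ∈ Finset.Icc 1 n ×ˢ Finset.Icc 1 n, g q.1 q.2
      = ∑ q ∈ Finset.Icc 1 n ×ˢ Finset.Icc 1 n, g q.2 q.1 := by
  refine Finset.sum_bij' (fun q _ => Prod.swap q) (fun q _ => Prod.swap q) ?_ ?_ ?_ ?_ ?_ <;>
    simp [Finset.mem_product, and_comm]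

theorem main (n : ℕ) (hn : 0 < n) :
    ((Finset.univ.filter fun p : n.Partition =>
        (p.parts.toFinset.filter fun i => Even i).card = 1).card : ℤ) =
      (∑ p ∈ Nat.Partition.odds n, (Multiset.card p.parts : ℤ)) -
        ∑ p ∈ Nat.Partition.distincts n, (Multiset.card p.parts : ℤ) := by
  have hBz : (∑ p ∈ Nat.Partition.odds n, (Multiset.card p.parts : ℤ))
      = ∑ q ∈ Finset.Icc 1 n ×ˢ Finset.Icc 1 n,
          if ¬Even q.1 ∧ q.1 * q.2 ≤ n then (Podd (n - q.1 * q.2) : ℤ) else 0 := by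
    have h := congrArg (Nat.cast : ℕ → ℤ) (Bsum n)
    push_cast at h
    exact h
  have hAz : ((Finset.univ.filter fun p : n.Partition =>
        (p.parts.toFinset.filter fun i => Even i).card = 1).card : ℤ)
      = ∑ q ∈ Finset.Icc 1 n ×ˢ Finset.Icc 1 n,
          if Even q.1 ∧ q.1 * q.2 ≤ n then (Podd (n - q.1 * q.2) : ℤ) else 0 := by
    have h := congrArg (Nat.cast : ℕ → ℤ) (Asum n)
    push_cast at h
    exact h
  have hCz := Csum n
  simp only [pdist_eq_podd] at hCz
  rw [hAz, hBz, hCz]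
  rw [← Finset.sum_sub_distrib]
  have hswap := swap_sum n
    (fun a b => if a * b ≤ n then (-1 : ℤ)^a * (Podd (n - a * b) : ℤ) else 0)
  have point : ∀ q ∈ Finset.Icc 1 n ×ˢ Finset.Icc 1 n,
      ((if ¬Even q.1 ∧ q.1 * q.2 ≤ n then (Podd (n - q.1 * q.2) : ℤ) else 0)
        - (if q.1 * q.2 ≤ n then (-1 : ℤ)^(q.2 + 1) * (Podd (n - q.1 * q.2) : ℤ) else 0))
      = (if Even q.1 ∧ q.1 * q.2 ≤ n then (Podd (n - q.1 * q.2) : ℤ) else 0)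
        + ((if q.2 * q.1 ≤ n then (-1 : ℤ)^q.2 * (Podd (n - q.2 * q.1) : ℤ) else 0)
          - (if q.1 * q.2 ≤ n then (-1 : ℤ)^q.1 * (Podd (n - q.1 * q.2) : ℤ) else 0)) := by
    intro q _
    rw [mul_comm q.2 q.1]
    by_cases hc : q.1 * q.2 ≤ n
    · rcases Nat.even_or_odd q.1 with he | ho
      · rw [if_neg (show ¬(¬Even q.1 ∧ q.1 * q.2 ≤ n) from fun h => h.1 he),
          if_pos hc, if_pos hc, if_pos hc, if_pos ⟨he, hc⟩, pow_succ, he.neg_one_pow]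
        ring
      · have hne : ¬Even q.1 := Nat.not_even_iff_odd.2 ho
        rw [if_pos ⟨hne, hc⟩, if_pos hc, if_pos hc, if_pos hc,
          if_neg (show ¬(Even q.1 ∧ q.1 * q.2 ≤ n) from fun h => hne h.1),
          pow_succ, ho.neg_one_pow]
        ring
    · rw [if_neg (show ¬(¬Even q.1 ∧ q.1 * q.2 ≤ n) from fun h => hc h.2), if_neg hc,
        if_neg hc, if_neg hc,
        if_neg (show ¬(Even q.1 ∧ q.1 * q.2 ≤ n) from fun h => hc h.2)]
      ring
  rw [Finset.sum_congr rfl point, Finset.sum_add_distrib, Finset.sum_sub_distrib,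
    ← hswap]
  ring

end Beck

open scoped Classical in
theorem one_even_part_count (n : ℕ) (hn : 0 < n) :
    ((Finset.univ.filter fun p : n.Partition =>
        (p.parts.toFinset.filter fun i => Even i).card = 1).card : ℤ) =
      (∑ p ∈ Nat.Partition.odds n, (Multiset.card p.parts : ℤ)) -
        ∑ p ∈ Nat.Partition.distincts n, (Multiset.card p.parts : ℤ) := by
  exact Beck.main n hn
end

section
/- For all positive integers n and k, the number of partitions of n having exactly k distinct even part values (each possibly repeated) equals the number of partitions of n having exactly k distinct part values that are repeated (appear with multiplicity at least 2). -/
open Finset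

lemma binom_delta (k : ℕ) (S : Finset ℕ) :
    ∑ T ∈ S.powerset, ((-1:ℤ)^(T.card + k) * (T.card.choose k)) =
      if S.card = k then 1 else 0 := by
  rw [Finset.sum_powerset_apply_card (fun m => ((-1:ℤ)^(m+k) * (m.choose k)))]
  set s := S.card with hs
  by_cases hks : k ≤ s
  · have h1 : ∀ m ∈ range (s+1), m ∉ Ico k (s+1) →
        (s.choose m) • ((-1:ℤ)^(m+k) * (m.choose k)) = 0 := by
      intro m hm hm'
      rw [mem_range] at hm
      rw [mem_Ico] at hm'
      have : m < k := by omega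
      simp [Nat.choose_eq_zero_of_lt this]
    rw [← Finset.sum_subset (fun m hm => by rw [mem_Ico] at hm; rw [mem_range]; omega) h1]
    rw [Finset.sum_Ico_eq_sum_range]
    have h2 : ∀ i ∈ range (s + 1 - k), (s.choose (k+i)) • ((-1:ℤ)^((k+i)+k) * ((k+i).choose k))
        = (s.choose k : ℤ) * ((-1)^i * ((s-k).choose i)) := by
      intro i hi
      rw [mem_range] at hi
      have hki : k + i ≤ s := by omega
      have hcm : s.choose (k+i) * (k+i).choose k = s.choose k * (s-k).choose ((k+i)-k) :=
        Nat.choose_mul (Nat.le_add_right _ _)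
      have hik : (k+i) - k = i := by omega
      rw [hik] at hcm
      have hpow : ((-1:ℤ))^((k+i)+k) = (-1)^i := by
        have : (k+i)+k = i + 2*k := by ring
        rw [this, pow_add, pow_mul]
        simp
      rw [hpow, nsmul_eq_mul]
      have hcm' : ((s.choose (k+i)) * ((k+i).choose k) : ℤ) = (s.choose k) * ((s-k).choose i) := by
        exact_mod_cast congrArg (Nat.cast (R := ℤ)) hcm
      push_cast
      linear_combination ((-1:ℤ))^i * hcm'
    rw [Finset.sum_congr rfl h2, ← Finset.mul_sum]
    have h3 : s + 1 - k = (s - k) + 1 := by omega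
    rw [h3, Int.alternating_sum_range_choose]
    by_cases hsk : s = k
    · simp [hsk]
    · have : s - k ≠ 0 := by omega
      simp [hsk, this]
  · have h1 : ∀ m ∈ range (s+1), (s.choose m) • ((-1:ℤ)^(m+k) * (m.choose k)) = 0 := by
      intro m hm
      rw [mem_range] at hm
      have : m < k := by omega
      simp [Nat.choose_eq_zero_of_lt this]
    rw [Finset.sum_congr rfl h1]
    have : s ≠ k := by omega
    simp [this]

open scoped Classical in
lemma master {α : Type*} [Fintype α] (S : α → Finset ℕ) (U : Finset ℕ)
    (hS : ∀ a, S a ⊆ U) (k : ℕ) :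
    ((univ.filter fun a => (S a).card = k).card : ℤ) =
      ∑ T ∈ U.powerset, (-1:ℤ)^(T.card + k) * (T.card.choose k) *
        ((univ.filter fun a => T ⊆ S a).card) := by
  have step1 : ∀ T : Finset ℕ,
      (-1:ℤ)^(T.card + k) * (T.card.choose k) * ((univ.filter fun a => T ⊆ S a).card)
      = ∑ a : α, (if T ⊆ S a then (-1:ℤ)^(T.card + k) * (T.card.choose k) else 0) := by
    intro T
    rw [Finset.card_filter]
    push_cast
    rw [Finset.mul_sum]
    exact Finset.sum_congr rfl fun a _ => by split <;> simp
  rw [Finset.sum_congr rfl fun T _ => step1 T, Finset.sum_comm]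
  rw [Finset.card_filter]
  push_cast
  refine Finset.sum_congr rfl fun a _ => ?_
  have hfil : U.powerset.filter (fun T => T ⊆ S a) = (S a).powerset := by
    ext T
    simp only [mem_filter, mem_powerset]
    exact ⟨fun h => h.2, fun h => ⟨h.trans (hS a), h⟩⟩
  rw [Finset.sum_ite, Finset.sum_const_zero, add_zero, hfil, binom_delta]

open scoped Classical in
lemma card_subset_eq (n : ℕ) (T : Finset ℕ) (hT : ∀ t ∈ T, 0 < t) :
    (univ.filter fun p : n.Partition =>
        (T.image (fun t => 2*t)) ⊆ p.parts.toFinset.filter (fun i => Even i)).card =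
    (univ.filter fun p : n.Partition =>
        T ⊆ p.parts.toFinset.filter (fun i => 2 ≤ p.parts.count i)).card := by
  set A' : Multiset ℕ := T.val.map (fun t => 2*t) with hA'
  set D : Multiset ℕ := T.val + T.val with hD
  have hsum : A'.sum = D.sum := by
    have h2 : (T.val.map (fun t => 2 * id t)).sum = 2 * (T.val.map id).sum :=
      Multiset.sum_map_mul_left
    simp only [id, Multiset.map_id'] at h2
    rw [hA', hD, Multiset.sum_add, ← two_mul]
    exact h2
  -- membership characterizations
  have hAmem : ∀ p : n.Partition,
      ((T.image (fun t => 2*t)) ⊆ p.parts.toFinset.filter (fun i => Even i)) ↔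
        ∀ t ∈ T, 2*t ∈ p.parts := by
    intro p
    constructor
    · intro h t ht
      have := h (mem_image_of_mem _ ht)
      rw [mem_filter, Multiset.mem_toFinset] at this
      exact this.1
    · intro h x hx
      rw [mem_image] at hx
      obtain ⟨t, ht, rfl⟩ := hx
      rw [mem_filter, Multiset.mem_toFinset]
      exact ⟨h t ht, even_two_mul t⟩
  have hBmem : ∀ p : n.Partition,
      (T ⊆ p.parts.toFinset.filter (fun i => 2 ≤ p.parts.count i)) ↔
        ∀ t ∈ T, 2 ≤ p.parts.count t := by
    intro p
    constructor
    · intro h t ht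
      have := h ht
      rw [mem_filter] at this
      exact this.2
    · intro h t ht
      rw [mem_filter, Multiset.mem_toFinset, ← Multiset.count_pos]
      have := h t ht
      exact ⟨by omega, this⟩
  have hA'le : ∀ p : n.Partition, (∀ t ∈ T, 2*t ∈ p.parts) → A' ≤ p.parts := by
    intro p h
    rw [Multiset.le_iff_count]
    intro v
    have hnod : A'.Nodup := T.nodup.map (fun a b hab => by omega)
    by_cases hv : v ∈ A'
    · rw [Multiset.count_eq_one_of_mem hnod hv]
      rw [hA', Multiset.mem_map] at hv
      obtain ⟨t, ht, rfl⟩ := hv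
      exact Multiset.count_pos.mpr (h t ht)
    · rw [Multiset.count_eq_zero_of_notMem hv]
      omega
  have hDle : ∀ p : n.Partition, (∀ t ∈ T, 2 ≤ p.parts.count t) → D ≤ p.parts := by
    intro p h
    rw [Multiset.le_iff_count]
    intro v
    rw [hD, Multiset.count_add]
    by_cases hv : v ∈ T
    · rw [Multiset.count_eq_one_of_mem T.nodup hv]
      exact h v hv
    · rw [Multiset.count_eq_zero_of_notMem (by simpa using hv)]
      omega
  -- the forward partition
  have mkpart : ∀ (M : Multiset ℕ) (B C : Multiset ℕ), C ≤ M → M.sum = n → B.sum = C.sum →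
      (∀ i ∈ B, 0 < i) → (∀ i ∈ M, 0 < i) → ((M - C + B).sum = n ∧ ∀ i ∈ M - C + B, 0 < i) := by
    intro M B C hle hMsum hBC hBpos hMpos
    constructor
    · have hcancel : (M - C) + C = M := tsub_add_cancel_of_le hle
      have := congrArg Multiset.sum hcancel
      rw [Multiset.sum_add] at this ⊢
      omega
    · intro i hi
      rw [Multiset.mem_add] at hi
      rcases hi with hi | hi
      · exact hMpos i (Multiset.mem_of_le (Multiset.sub_le_self _ _) hi)
      · exact hBpos i hi
  have hDpos : ∀ i ∈ D, 0 < i := by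
    intro i hi
    rw [hD, Multiset.mem_add] at hi
    rcases hi with hi | hi <;> exact hT i hi
  have hA'pos : ∀ i ∈ A', 0 < i := by
    intro i hi
    rw [hA', Multiset.mem_map] at hi
    obtain ⟨t, ht, rfl⟩ := hi
    have := hT t ht
    omega
  refine Finset.card_bij'
    (fun p hp => ⟨p.parts - A' + D, ?_, ?_⟩)
    (fun q hq => ⟨q.parts - D + A', ?_, ?_⟩) ?_ ?_ ?_ ?_
  · intro i hi
    have hp' := (hAmem p).mp ((mem_filter.mp hp).2)
    exact (mkpart p.parts D A' (hA'le p hp') p.parts_sum hsum.symm hDpos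
      (fun i hi => p.parts_pos hi)).2 i hi
  · have hp' := (hAmem p).mp ((mem_filter.mp hp).2)
    exact (mkpart p.parts D A' (hA'le p hp') p.parts_sum hsum.symm hDpos
      (fun i hi => p.parts_pos hi)).1
  · intro i hi
    have hq' := (hBmem q).mp ((mem_filter.mp hq).2)
    exact (mkpart q.parts A' D (hDle q hq') q.parts_sum hsum hA'pos
      (fun i hi => q.parts_pos hi)).2 i hi
  · have hq' := (hBmem q).mp ((mem_filter.mp hq).2)
    exact (mkpart q.parts A' D (hDle q hq') q.parts_sum hsum hA'pos
      (fun i hi => q.parts_pos hi)).1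
  · intro p hp
    rw [mem_filter]
    refine ⟨mem_univ _, (hBmem _).mpr ?_⟩
    intro t ht
    show 2 ≤ Multiset.count t (p.parts - A' + D)
    rw [Multiset.count_add, hD, Multiset.count_add, Multiset.count_eq_one_of_mem T.nodup ht]
    omega
  · intro q hq
    rw [mem_filter]
    refine ⟨mem_univ _, (hAmem _).mpr ?_⟩
    intro t ht
    show 2*t ∈ q.parts - D + A'
    rw [Multiset.mem_add]
    right
    rw [hA']
    exact Multiset.mem_map_of_mem _ (by simpa using ht)
  · intro p hp
    have hp' := (hAmem p).mp ((mem_filter.mp hp).2)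
    ext1
    show p.parts - A' + D - D + A' = p.parts
    rw [add_tsub_cancel_right, tsub_add_cancel_of_le (hA'le p hp')]
  · intro q hq
    have hq' := (hBmem q).mp ((mem_filter.mp hq).2)
    ext1
    show q.parts - D + A' - A' + D = q.parts
    rw [add_tsub_cancel_right, tsub_add_cancel_of_le (hDle q hq')]

open scoped Classical in
theorem even_values_eq_repeated_values (n k : ℕ) (hn : 0 < n) (hk : 0 < k) :
    (Finset.univ.filter fun p : n.Partition =>
        (p.parts.toFinset.filter fun i => Even i).card = k).card =
      (Finset.univ.filter fun p : n.Partition =>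
        (p.parts.toFinset.filter fun i => 2 ≤ p.parts.count i).card = k).card := by
  classical
  set U : Finset ℕ := (Finset.range (n+1)).filter (fun i => 0 < i) with hU
  have hpartle : ∀ (p : n.Partition) (i : ℕ), i ∈ p.parts → i ≤ n := by
    intro p i hi
    calc i ≤ p.parts.sum := Multiset.single_le_sum (fun x _ => Nat.zero_le x) i hi
    _ = n := p.parts_sum
  have hSB : ∀ p : n.Partition, (p.parts.toFinset.filter fun i => 2 ≤ p.parts.count i) ⊆ U := by
    intro p i hi
    rw [mem_filter] at hi
    obtain ⟨hi, -⟩ := hi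
    rw [Multiset.mem_toFinset] at hi
    rw [hU, mem_filter, mem_range]
    exact ⟨by have := hpartle p i hi; omega, p.parts_pos hi⟩
  have hSA : ∀ p : n.Partition,
      (p.parts.toFinset.filter fun i => Even i) ⊆ U.image (fun t => 2*t) := by
    intro p i hi
    rw [mem_filter] at hi
    obtain ⟨hi', hev⟩ := hi
    rw [Multiset.mem_toFinset] at hi'
    obtain ⟨j, rfl⟩ := hev
    have h1 : 0 < j := by have := p.parts_pos hi'; omega
    have h2 : j + j ≤ n := hpartle p _ hi'
    rw [mem_image]
    exact ⟨j, by rw [hU, mem_filter, mem_range]; exact ⟨by omega, h1⟩, by omega⟩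
  have hA := master (fun p : n.Partition => p.parts.toFinset.filter fun i => Even i)
    (U.image (fun t => 2*t)) hSA k
  have hB := master
    (fun p : n.Partition => p.parts.toFinset.filter fun i => 2 ≤ p.parts.count i) U hSB k
  have hUpos : ∀ t ∈ U, 0 < t := by
    intro t ht
    rw [hU, mem_filter] at ht
    exact ht.2
  have hreindex : ∑ T ∈ U.powerset, (-1:ℤ)^(T.card + k) * (T.card.choose k) *
        ((univ.filter fun p : n.Partition =>
          T ⊆ p.parts.toFinset.filter fun i => 2 ≤ p.parts.count i).card)
      = ∑ T ∈ (U.image fun t => 2*t).powerset, (-1:ℤ)^(T.card + k) * (T.card.choose k) *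
        ((univ.filter fun p : n.Partition =>
          T ⊆ p.parts.toFinset.filter fun i => Even i).card) := by
    refine Finset.sum_bij' (i := fun T _ => T.image (fun t => 2*t))
      (j := fun T' _ => T'.image (fun x => x/2)) ?_ ?_ ?_ ?_ ?_
    · intro T hT
      rw [mem_powerset] at hT ⊢
      exact image_subset_image hT
    · intro T' hT'
      rw [mem_powerset] at hT' ⊢
      intro x hx
      rw [mem_image] at hx
      obtain ⟨y, hy, rfl⟩ := hx
      have := hT' hy
      rw [mem_image] at this
      obtain ⟨u, hu, rfl⟩ := this
      have : 2 * u / 2 = u := by omega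
      rwa [this]
    · intro T hT
      show image (fun x => x/2) (image (fun t => 2*t) T) = T
      rw [image_image]
      have h : Set.EqOn ((fun x => x/2) ∘ fun t => 2*t) id (T : Set ℕ) := by
        intro x hx
        simp only [Function.comp_apply, id_eq]
        omega
      rw [Finset.image_congr h, image_id]
    · intro T' hT'
      rw [mem_powerset] at hT'
      show image (fun t => 2*t) (image (fun x => x/2) T') = T'
      rw [image_image]
      have h : Set.EqOn ((fun t => 2*t) ∘ fun x => x/2) id (T' : Set ℕ) := by
        intro x hx
        rw [Finset.mem_coe] at hx
        have := hT' hx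
        rw [mem_image] at this
        obtain ⟨u, hu, rfl⟩ := this
        simp only [Function.comp_apply, id_eq]
        omega
      rw [Finset.image_congr h, image_id]
    · intro T hT
      rw [mem_powerset] at hT
      have hinj : Function.Injective (fun t : ℕ => 2*t) := fun a b hab => by
        simp only [] at hab
        omega
      rw [card_image_of_injective _ hinj]
      rw [card_subset_eq n T (fun t ht => hUpos t (hT ht))]
  rw [hreindex, ← hA] at hB
  exact_mod_cast hB.symm
end

section
/- For every integer d ≥ 2 and every positive integer n, the number of partitions of n in which no part is divisible by d equals the number of partitions of n in which no part appears d or more times. -/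
namespace Glaisher

/-- d-adic "core": strip all factors of d. -/
def core (d k : ℕ) : ℕ :=
  if h : 2 ≤ d ∧ d ∣ k ∧ k ≠ 0 then core d (k / d) else k
termination_by k
decreasing_by exact Nat.div_lt_self (Nat.pos_of_ne_zero h.2.2) (by omega)

/-- d-adic valuation. -/
def dval (d k : ℕ) : ℕ :=
  if h : 2 ≤ d ∧ d ∣ k ∧ k ≠ 0 then dval d (k / d) + 1 else 0
termination_by k
decreasing_by exact Nat.div_lt_self (Nat.pos_of_ne_zero h.2.2) (by omega)

variable {d : ℕ} (hd : 2 ≤ d)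

include hd

lemma core_mul_pow (k : ℕ) : core d k * d ^ dval d k = k := by
  induction k using Nat.strong_induction_on with
  | _ k ih =>
    by_cases h : d ∣ k ∧ k ≠ 0
    · rw [core, dval, dif_pos ⟨hd, h⟩, dif_pos ⟨hd, h⟩, pow_succ, ← mul_assoc,
        ih (k / d) (Nat.div_lt_self (Nat.pos_of_ne_zero h.2) (by omega))]
      exact Nat.div_mul_cancel h.1
    · rw [core, dval, dif_neg (by tauto), dif_neg (by tauto), pow_zero, mul_one]

lemma not_dvd_core (k : ℕ) (hk : k ≠ 0) : ¬ d ∣ core d k := by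
  induction k using Nat.strong_induction_on with
  | _ k ih =>
    by_cases h : d ∣ k
    · rw [core, dif_pos ⟨hd, h, hk⟩]
      have : 1 ≤ k / d := (Nat.one_le_div_iff (by omega)).2 (Nat.le_of_dvd (Nat.pos_of_ne_zero hk) h)
      exact ih (k / d) (Nat.div_lt_self (Nat.pos_of_ne_zero hk) (by omega)) (by omega)
    · rw [core, dif_neg (by tauto)]
      exact h


lemma core_pos (k : ℕ) (hk : k ≠ 0) : 0 < core d k := by
  rcases Nat.eq_zero_or_pos (core d k) with h | h
  · have := core_mul_pow hd k
    rw [h, zero_mul] at this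
    omega
  · exact h

lemma core_spec (i j : ℕ) (hi : ¬ d ∣ i) (hi0 : i ≠ 0) :
    core d (i * d ^ j) = i ∧ dval d (i * d ^ j) = j := by
  induction j with
  | zero =>
    rw [pow_zero, mul_one, core, dval, dif_neg (by tauto), dif_neg (by tauto)]
    exact ⟨rfl, rfl⟩
  | succ j ih =>
    have hne : i * d ^ (j + 1) ≠ 0 := by positivity
    have hdvd : d ∣ i * d ^ (j + 1) := ⟨i * d ^ j, by ring⟩
    have hq : i * d ^ (j + 1) / d = i * d ^ j := by
      rw [pow_succ, ← mul_assoc, Nat.mul_div_cancel _ (by omega : 0 < d)]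
    rw [core, dval, dif_pos ⟨hd, hdvd, hne⟩, dif_pos ⟨hd, hdvd, hne⟩, hq]
    exact ⟨ih.1, by rw [ih.2]⟩

lemma pow_mul_inj {i₁ j₁ i₂ j₂ : ℕ} (h1 : ¬ d ∣ i₁) (h01 : i₁ ≠ 0)
    (h2 : ¬ d ∣ i₂) (h02 : i₂ ≠ 0) (h : i₁ * d ^ j₁ = i₂ * d ^ j₂) :
    i₁ = i₂ ∧ j₁ = j₂ := by
  have c1 := core_spec hd i₁ j₁ h1 h01
  have c2 := core_spec hd i₂ j₂ h2 h02
  rw [h] at c1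
  exact ⟨c1.1.symm.trans c2.1, c1.2.symm.trans c2.2⟩

lemma dval_le (k : ℕ) (hk : k ≠ 0) : dval d k ≤ k := by
  have h1 : d ^ dval d k ≤ k := by
    conv_rhs => rw [← core_mul_pow hd k]
    exact Nat.le_mul_of_pos_left _ (core_pos hd k hk)
  have := Nat.lt_two_pow_self (n := dval d k)
  have := Nat.pow_le_pow_left hd (dval d k)
  omega


omit hd in
/-- Spread `m` copies of part `i` into parts `i*d^j` with multiplicities the base-d digits. -/
def spread (d i m : ℕ) : Multiset ℕ :=
  if h : 2 ≤ d ∧ m ≠ 0 then Multiset.replicate (m % d) i + spread d (i * d) (m / d) else 0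
termination_by m
decreasing_by exact Nat.div_lt_self (Nat.pos_of_ne_zero h.2) (by omega)

lemma spread_zero (i : ℕ) : spread d i 0 = 0 := by rw [spread]; simp

lemma spread_sum (i m : ℕ) : (spread d i m).sum = i * m := by
  induction m using Nat.strong_induction_on generalizing i with
  | _ m ih =>
    by_cases h : m = 0
    · subst h; rw [spread_zero hd]; simp
    · rw [spread, dif_pos ⟨hd, h⟩, Multiset.sum_add, Multiset.sum_replicate,
        ih (m / d) (Nat.div_lt_self (Nat.pos_of_ne_zero h) (by omega))]
      rw [smul_eq_mul]
      nlinarith [Nat.mod_add_div m d]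

lemma mem_spread {i m k : ℕ} (hk : k ∈ spread d i m) : ∃ j, k = i * d ^ j := by
  induction m using Nat.strong_induction_on generalizing i with
  | _ m ih =>
    by_cases h : m = 0
    · subst h; rw [spread_zero hd] at hk; simp at hk
    · rw [spread, dif_pos ⟨hd, h⟩, Multiset.mem_add] at hk
      rcases hk with hk | hk
      · exact ⟨0, by simpa using Multiset.eq_of_mem_replicate hk⟩
      · obtain ⟨j, hj⟩ := ih (m / d) (Nat.div_lt_self (Nat.pos_of_ne_zero h) (by omega)) hk
        exact ⟨j + 1, by rw [hj]; ring⟩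

lemma count_spread (i m j : ℕ) (hi : i ≠ 0) :
    Multiset.count (i * d ^ j) (spread d i m) = m / d ^ j % d := by
  induction m using Nat.strong_induction_on generalizing i j with
  | _ m ih =>
    by_cases h : m = 0
    · subst h; rw [spread_zero hd]; simp
    · rw [spread, dif_pos ⟨hd, h⟩, Multiset.count_add, Multiset.count_replicate]
      have hdiv : m / d < m := Nat.div_lt_self (Nat.pos_of_ne_zero h) (by omega)
      cases j with
      | zero =>
        simp only [pow_zero, mul_one, Nat.div_one, if_pos rfl]
        have h0 : Multiset.count i (spread d (i * d) (m / d)) = 0 := by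
          rw [Multiset.count_eq_zero]
          intro hmem
          obtain ⟨j', hj'⟩ := mem_spread hd hmem
          rw [mul_assoc] at hj'
          have h1 : i * 1 = i * (d * d ^ j') := by rw [mul_one]; exact hj'
          have h2 := Nat.eq_of_mul_eq_mul_left (Nat.pos_of_ne_zero hi) h1
          have h3 := Nat.one_le_pow j' d (by omega)
          nlinarith
        rw [h0]
        simp
      | succ j =>
        rw [if_neg (by
          intro heq
          have h1 : d ^ (j + 1) ≥ d := Nat.le_self_pow (by omega) d
          nlinarith [Nat.pos_of_ne_zero hi])]
        have hrw : i * d ^ (j + 1) = i * d * d ^ j := by ring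
        rw [hrw, ih (m / d) hdiv (i * d) j (by positivity), Nat.div_div_eq_div_mul,
          ← pow_succ', zero_add]


omit hd in
/-- Merge each part `k` into `d^(v_d k)` copies of its core. -/
def gather (d : ℕ) (t : Multiset ℕ) : Multiset ℕ :=
  t.bind fun k => Multiset.replicate (d ^ dval d k) (core d k)

omit hd in
lemma gather_add (t u : Multiset ℕ) : gather d (t + u) = gather d t + gather d u :=
  Multiset.add_bind t u _

lemma gather_sum (t : Multiset ℕ) : (gather d t).sum = t.sum := by
  rw [gather, Multiset.sum_bind]
  have : Multiset.map (fun k => (Multiset.replicate (d ^ dval d k) (core d k)).sum) t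
      = Multiset.map id t := by
    refine Multiset.map_congr rfl fun k _ => ?_
    rw [Multiset.sum_replicate, smul_eq_mul, id, mul_comm, core_mul_pow hd]
  rw [this, Multiset.map_id]

omit hd in
lemma gather_replicate (c k : ℕ) :
    gather d (Multiset.replicate c k) = Multiset.replicate (c * d ^ dval d k) (core d k) := by
  induction c with
  | zero => simp [gather]
  | succ c ih =>
    rw [Multiset.replicate_succ, gather, Multiset.cons_bind, ← gather, ih, add_mul, one_mul,
      add_comm (c * d ^ dval d k), Multiset.replicate_add]

lemma gather_spread (i j m : ℕ) (hi : ¬ d ∣ i) (hi0 : i ≠ 0) :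
    gather d (spread d (i * d ^ j) m) = Multiset.replicate (m * d ^ j) i := by
  induction m using Nat.strong_induction_on generalizing j with
  | _ m ih =>
    by_cases h : m = 0
    · subst h; rw [spread_zero hd]; simp [gather]
    · have hdiv : m / d < m := Nat.div_lt_self (Nat.pos_of_ne_zero h) (by omega)
      rw [spread, dif_pos ⟨hd, h⟩, gather_add, gather_replicate,
        (core_spec hd i j hi hi0).1, (core_spec hd i j hi hi0).2]
      have hrw : i * d ^ j * d = i * d ^ (j + 1) := by ring
      rw [hrw, ih (m / d) hdiv (j + 1), ← Multiset.replicate_add]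
      congr 1
      have := Nat.mod_add_div m d
      have : (m % d) * d ^ j + m / d * d ^ (j + 1) = (m % d + d * (m / d)) * d ^ j := by ring
      rw [this, Nat.mod_add_div]


open Multiset in
omit hd in
/-- Expand each part's multiplicity in base d. -/
def expand (d : ℕ) (s : Multiset ℕ) : Multiset ℕ :=
  ∑ i ∈ s.toFinset, spread d i (s.count i)

omit hd in
lemma sum_finset_sum {α : Type*} (s : Finset α) (f : α → Multiset ℕ) :
    (∑ i ∈ s, f i).sum = ∑ i ∈ s, (f i).sum := by
  classical
  induction s using Finset.induction_on with
  | empty => simp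
  | insert _ _ h ih => rw [Finset.sum_insert h, Finset.sum_insert h, Multiset.sum_add, ih]

omit hd in
lemma gather_finset_sum {α : Type*} (s : Finset α) (f : α → Multiset ℕ) :
    gather d (∑ i ∈ s, f i) = ∑ i ∈ s, gather d (f i) := by
  classical
  induction s using Finset.induction_on with
  | empty => simp [gather]
  | insert _ _ h ih => rw [Finset.sum_insert h, Finset.sum_insert h, gather_add, ih]

lemma expand_sum (s : Multiset ℕ) : (expand d s).sum = s.sum := by
  rw [expand, sum_finset_sum]
  have h2 := Finset.sum_multiset_map_count s (id : ℕ → ℕ)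
  simp only [Multiset.map_id', smul_eq_mul, id] at h2
  conv_rhs => rw [h2]
  exact Finset.sum_congr rfl fun i _ => by rw [spread_sum hd, mul_comm]

lemma gather_expand (s : Multiset ℕ) (hs : ∀ i ∈ s, ¬ d ∣ i) (hs0 : ∀ i ∈ s, i ≠ 0) :
    gather d (expand d s) = s := by
  rw [expand, gather_finset_sum]
  have : ∀ i ∈ s.toFinset, gather d (spread d i (s.count i)) = s.count i • ({i} : Multiset ℕ) := by
    intro i hi
    rw [Multiset.mem_toFinset] at hi
    have h1 : i * d ^ 0 = i := by simp
    rw [← h1, gather_spread hd i 0 _ (hs i hi) (hs0 i hi), Multiset.nsmul_singleton]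
    simp
  rw [Finset.sum_congr rfl this, Multiset.toFinset_sum_count_nsmul_eq]

lemma count_expand (s : Multiset ℕ) (hs : ∀ i ∈ s, ¬ d ∣ i) (hs0 : ∀ i ∈ s, i ≠ 0) (k : ℕ) :
    Multiset.count k (expand d s)
      = Multiset.count k (spread d (core d k) (s.count (core d k))) := by
  rw [expand, Multiset.count_sum']
  refine Finset.sum_eq_single (core d k) ?_ ?_
  · intro i hi hne
    rw [Multiset.mem_toFinset] at hi
    rw [Multiset.count_eq_zero]
    intro hmem
    obtain ⟨j, hj⟩ := mem_spread hd hmem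
    have hcore : core d k = i := by rw [hj, (core_spec hd i j (hs i hi) (hs0 i hi)).1]
    exact hne hcore.symm
  · intro hni
    have : s.count (core d k) = 0 := by
      rw [Multiset.count_eq_zero]
      intro hmem
      exact hni (Multiset.mem_toFinset.2 hmem)
    rw [this, spread_zero hd]
    simp


omit hd in
lemma core_zero : core d 0 = 0 := by rw [core]; simp

lemma count_expand_lt (s : Multiset ℕ) (hs : ∀ i ∈ s, ¬ d ∣ i) (hs0 : ∀ i ∈ s, i ≠ 0)
    (k : ℕ) : Multiset.count k (expand d s) < d := by
  rw [count_expand hd s hs hs0 k]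
  by_cases hk : k = 0
  · subst hk
    rw [core_zero]
    have h0 : s.count 0 = 0 := Multiset.count_eq_zero.2 fun h => hs0 0 h rfl
    rw [h0, spread_zero hd]
    simpa using by omega
  · set i0 := core d k with hi0def
    set j0 := dval d k with hj0def
    have hkeq : i0 * d ^ j0 = k := core_mul_pow hd k
    rw [← hkeq, count_spread hd _ _ _ (core_pos hd k hk).ne']
    exact Nat.mod_lt _ (by omega)

lemma zero_not_mem_expand (s : Multiset ℕ) (hs : ∀ i ∈ s, ¬ d ∣ i) (hs0 : ∀ i ∈ s, i ≠ 0) :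
    0 ∉ expand d s := by
  rw [← Multiset.count_eq_zero, count_expand hd s hs hs0 0, core_zero,
    Multiset.count_eq_zero.2 fun h => hs0 0 h rfl, spread_zero hd]
  simp

lemma digit_extract : ∀ (N : ℕ) (f : ℕ → ℕ), (∀ j, f j < d) → ∀ (t : ℕ),
    (∑ j ∈ Finset.range N, f j * d ^ j) / d ^ t % d = if t < N then f t else 0 := by
  intro N
  induction N with
  | zero => intro f hf t; simp
  | succ N ih =>
    intro f hf t
    have hsplit : ∑ j ∈ Finset.range (N + 1), f j * d ^ j
        = d * (∑ j ∈ Finset.range N, f (j + 1) * d ^ j) + f 0 := by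
      rw [Finset.sum_range_succ' (fun j => f j * d ^ j) N, Finset.mul_sum]
      simp only [pow_zero, mul_one]
      congr 1
      exact Finset.sum_congr rfl fun j _ => by ring
    rw [hsplit]
    cases t with
    | zero =>
      rw [pow_zero, Nat.div_one, Nat.mul_add_mod, Nat.mod_eq_of_lt (hf 0), if_pos (by omega)]
    | succ t =>
      have h1 : (d * (∑ j ∈ Finset.range N, f (j + 1) * d ^ j) + f 0) / d ^ (t + 1)
          = (∑ j ∈ Finset.range N, f (j + 1) * d ^ j) / d ^ t := by
        rw [pow_succ', ← Nat.div_div_eq_div_mul, Nat.mul_add_div (by omega),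
          Nat.div_eq_of_lt (hf 0), add_zero]
      rw [h1, ih (fun j => f (j + 1)) (fun j => hf (j + 1)) t]
      simp only [Nat.add_lt_add_iff_right]

omit hd in
lemma mem_gather {t : Multiset ℕ} {i : ℕ} (hdpos : 0 < d) :
    i ∈ gather d t ↔ ∃ k ∈ t, core d k = i := by
  rw [gather, Multiset.mem_bind]
  constructor
  · rintro ⟨k, hk, hmem⟩
    exact ⟨k, hk, (Multiset.eq_of_mem_replicate hmem).symm⟩
  · rintro ⟨k, hk, hcore⟩
    exact ⟨k, hk, hcore ▸ Multiset.mem_replicate.2 ⟨(Nat.pow_pos hdpos).ne', rfl⟩⟩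

lemma count_gather (t : Multiset ℕ) (ht0 : ∀ k ∈ t, k ≠ 0) (i : ℕ) (hi : ¬ d ∣ i)
    (hi0 : i ≠ 0) (N : ℕ) (hN : ∀ k ∈ t, dval d k < N) :
    Multiset.count i (gather d t) = ∑ j ∈ Finset.range N, t.count (i * d ^ j) * d ^ j := by
  rw [gather, Multiset.count_bind]
  have h1 : Multiset.map (fun k => Multiset.count i (Multiset.replicate (d ^ dval d k) (core d k))) t
      = Multiset.map (fun k => if core d k = i then d ^ dval d k else 0) t :=
    Multiset.map_congr rfl fun k _ => Multiset.count_replicate _ _ _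
  rw [h1, Finset.sum_multiset_map_count]
  simp only [smul_eq_mul, mul_ite, mul_zero]
  rw [← Finset.sum_filter]
  have h2 : ∑ j ∈ Finset.range N, t.count (i * d ^ j) * d ^ j
      = ∑ j ∈ (Finset.range N).filter (fun j => i * d ^ j ∈ t), t.count (i * d ^ j) * d ^ j := by
    refine (Finset.sum_filter_of_ne fun j _ hne => ?_).symm
    by_contra hmem
    rw [Multiset.count_eq_zero.2 hmem, zero_mul] at hne
    exact hne rfl
  rw [h2]
  refine Finset.sum_nbij' (fun k => dval d k) (fun j => i * d ^ j) ?_ ?_ ?_ ?_ ?_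
  · intro k hk
    simp only [Finset.mem_filter, Multiset.mem_toFinset] at hk
    exact Finset.mem_filter.2 ⟨Finset.mem_range.2 (hN k hk.1), by
      rw [← hk.2]; rw [core_mul_pow hd]; exact hk.1⟩
  · intro j hj
    simp only [Finset.mem_filter, Finset.mem_range] at hj
    exact Finset.mem_filter.2 ⟨Multiset.mem_toFinset.2 hj.2, (core_spec hd i j hi hi0).1⟩
  · intro k hk
    simp only [Finset.mem_filter, Multiset.mem_toFinset] at hk
    rw [← hk.2]
    exact core_mul_pow hd k
  · intro j hj
    exact (core_spec hd i j hi hi0).2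
  · intro k hk
    simp only [Finset.mem_filter, Multiset.mem_toFinset] at hk
    rw [← hk.2]
    rw [core_mul_pow hd]

lemma expand_gather (t : Multiset ℕ) (ht0 : ∀ k ∈ t, k ≠ 0)
    (htc : ∀ k, t.count k < d) : expand d (gather d t) = t := by
  have hmem : ∀ i ∈ gather d t, ¬ d ∣ i ∧ i ≠ 0 := by
    intro i hig
    obtain ⟨k, hk, hcore⟩ := (mem_gather (by omega)).1 hig
    exact ⟨hcore ▸ not_dvd_core hd k (ht0 k hk), hcore ▸ (core_pos hd k (ht0 k hk)).ne'⟩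
  ext k
  rw [count_expand hd _ (fun i h => (hmem i h).1) (fun i h => (hmem i h).2) k]
  by_cases hk : k = 0
  · subst hk
    rw [core_zero, Multiset.count_eq_zero.2 (fun h => (hmem 0 h).2 rfl), spread_zero hd]
    rw [Multiset.count_eq_zero.2 (fun h => ht0 0 h rfl)]
    simp
  · set N : ℕ := t.sum + 1 with hNdef
    have hN : ∀ k' ∈ t, dval d k' < N := by
      intro k' hk'
      have h1 : dval d k' ≤ k' := dval_le hd k' (ht0 k' hk')
      have h2 : k' ≤ t.sum := Multiset.single_le_sum (fun x _ => Nat.zero_le x) k' hk'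
      omega
    have hi0 : core d k ≠ 0 := (core_pos hd k hk).ne'
    have hid : ¬ d ∣ core d k := not_dvd_core hd k hk
    set i0 := core d k with hi0def
    set j0 := dval d k with hj0def
    have hkeq : i0 * d ^ j0 = k := core_mul_pow hd k
    rw [← hkeq, count_spread hd _ _ _ hi0,
      count_gather hd t ht0 i0 hid hi0 N hN,
      digit_extract hd N (fun j => t.count (i0 * d ^ j)) (fun j => htc _) j0]
    split_ifs with hlt
    · rfl
    · rw [eq_comm, Multiset.count_eq_zero]
      intro hmem'
      rw [hkeq] at hmem'
      exact hlt (hN k hmem')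


/-- Expansion at the level of partitions. -/
def expandP {n : ℕ} (p : n.Partition) : n.Partition where
  parts := expand d p.parts
  parts_pos := by
    intro i hi
    rw [expand, Multiset.mem_sum] at hi
    obtain ⟨x, hx, hmem⟩ := hi
    obtain ⟨j, hj⟩ := mem_spread hd hmem
    rw [Multiset.mem_toFinset] at hx
    have := p.parts_pos hx
    have := Nat.one_le_pow j d (by omega)
    subst hj
    positivity
  parts_sum := by rw [expand_sum hd, p.parts_sum]

/-- Gathering at the level of partitions. -/
def gatherP {n : ℕ} (p : n.Partition) : n.Partition where
  parts := gather d p.parts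
  parts_pos := by
    intro i hi
    obtain ⟨k, hk, hcore⟩ := (mem_gather (by omega)).1 hi
    exact hcore ▸ core_pos hd k (p.parts_pos hk).ne'
  parts_sum := by rw [gather_sum hd, p.parts_sum]

end Glaisher

open scoped Classical in
theorem glaisher (d n : ℕ) (hd : 2 ≤ d) (hn : 0 < n) :
    (Finset.univ.filter fun p : n.Partition =>
        ∀ i ∈ p.parts, ¬ d ∣ i).card =
      (Finset.univ.filter fun p : n.Partition =>
        ∀ i : ℕ, p.parts.count i < d).card := by
  refine Finset.card_bij' (fun p _ => Glaisher.expandP hd p) (fun q _ => Glaisher.gatherP hd q)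
    ?_ ?_ ?_ ?_
  · intro p hp
    rw [Finset.mem_filter] at hp ⊢
    refine ⟨Finset.mem_univ _, fun k => ?_⟩
    exact Glaisher.count_expand_lt hd p.parts hp.2 (fun i h => (p.parts_pos h).ne') k
  · intro q hq
    rw [Finset.mem_filter] at hq ⊢
    refine ⟨Finset.mem_univ _, fun i hi => ?_⟩
    obtain ⟨k, hk, hcore⟩ := (Glaisher.mem_gather (show 0 < d by omega)).1 hi
    exact hcore ▸ Glaisher.not_dvd_core hd k (q.parts_pos hk).ne'
  · intro p hp
    rw [Finset.mem_filter] at hp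
    ext1
    exact Glaisher.gather_expand hd p.parts hp.2 (fun i h => (p.parts_pos h).ne')
  · intro q hq
    rw [Finset.mem_filter] at hq
    ext1
    exact Glaisher.expand_gather hd q.parts (fun k h => (q.parts_pos h).ne') hq.2
end

section
/- For all positive integers n, k and every integer p ≥ 2, the number of partitions of n having exactly k distinct part values divisible by 2^p equals the number of partitions of n having exactly k distinct part values appearing at least 2^p times. -/
open Finset

namespace GlaisherAux

/-! ### digit lemmas -/

lemma digit_sum {b : ℕ} : ∀ (k m : ℕ), m < b ^ k →
    ∑ i ∈ Finset.range k, b ^ i * (m / b ^ i % b) = m := by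
  intro k
  induction k with
  | zero => intro m h; simpa using (Nat.lt_one_iff.mp (by simpa using h)).symm
  | succ k ih =>
    intro m h
    rcases Nat.eq_zero_or_pos b with hb | hb
    · subst hb; simp at h
    rw [Finset.sum_range_succ']
    have step : ∀ i, b ^ (i+1) * (m / b ^ (i+1) % b) = b * (b ^ i * (m / b / b ^ i % b)) := by
      intro i
      rw [pow_succ', Nat.div_div_eq_div_mul, ← pow_succ']
      ring
    simp_rw [step]
    rw [← Finset.mul_sum, ih (m / b) (by rwa [Nat.div_lt_iff_lt_mul hb, ← pow_succ])]
    simp [Nat.div_add_mod]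

lemma digit_extract {b : ℕ} (hb : 0 < b) :
    ∀ (i : ℕ) (d : ℕ → ℕ), (∀ j, d j < b) → ∀ T,
      (∑ j ∈ Finset.range T, b ^ j * d j) / b ^ i % b = if i < T then d i else 0 := by
  intro i
  induction i with
  | zero =>
    intro d hd T
    cases T with
    | zero => simp
    | succ T =>
      rw [Finset.sum_range_succ']
      have step : ∀ j, b ^ (j+1) * d (j+1) = b * (b ^ j * d (j+1)) := by
        intro j; rw [pow_succ']; ring
      simp_rw [step]
      rw [← Finset.mul_sum]
      simp [Nat.mul_add_mod, Nat.mod_eq_of_lt (hd 0)]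
  | succ i ih =>
    intro d hd T
    cases T with
    | zero => simp
    | succ T =>
      rw [Finset.sum_range_succ']
      have step : ∀ j, b ^ (j+1) * d (j+1) = b * (b ^ j * d (j+1)) := by
        intro j; rw [pow_succ']; ring
      simp_rw [step]
      rw [← Finset.mul_sum]
      have h1 : (b * (∑ j ∈ Finset.range T, b ^ j * d (j+1)) + b ^ 0 * d 0) / b ^ (i+1)
          = (∑ j ∈ Finset.range T, b ^ j * d (j+1)) / b ^ i := by
        rw [pow_succ', ← Nat.div_div_eq_div_mul]
        congr 1
        rw [pow_zero, one_mul, Nat.mul_add_div hb, Nat.div_eq_of_lt (hd 0), add_zero]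
      rw [h1, ih (fun j => d (j+1)) (fun j => hd (j+1)) T]
      simp [Nat.succ_lt_succ_iff]


/-! ### N-adic decomposition -/

def iP (N v : ℕ) : ℕ := Nat.findGreatest (fun i => N ^ i ∣ v) v

def uP (N v : ℕ) : ℕ := v / N ^ iP N v

lemma pow_iP_dvd (N v : ℕ) : N ^ iP N v ∣ v := by
  classical
  exact Nat.findGreatest_spec (P := fun i => N ^ i ∣ v) (Nat.zero_le v) (by simp)

lemma iP_mul_uP (N v : ℕ) : N ^ iP N v * uP N v = v :=
  Nat.mul_div_cancel' (pow_iP_dvd N v)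

lemma iP_eq {N : ℕ} (hN : 2 ≤ N) {u : ℕ} (hu : ¬ N ∣ u) (i : ℕ) :
    iP N (N ^ i * u) = i := by
  classical
  have hu0 : u ≠ 0 := by rintro rfl; exact hu (dvd_zero N)
  have hNpos : 0 < N := by omega
  have hb : ∀ j, N ^ j ∣ N ^ i * u → j ≤ i := by
    intro j hj
    by_contra hlt
    push_neg at hlt
    have h1 : N ^ (i+1) ∣ N ^ i * u := dvd_trans (pow_dvd_pow N hlt) hj
    rw [pow_succ] at h1
    exact hu ((mul_dvd_mul_iff_left (a := N ^ i) (pow_ne_zero i (by omega))).mp h1)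
  refine le_antisymm (hb _ (pow_iP_dvd N _)) ?_
  refine Nat.le_findGreatest (le_of_lt ?_) (dvd_mul_right _ _)
  calc i < 2 ^ i := Nat.lt_two_pow_self (n := i)
    _ ≤ N ^ i := Nat.pow_le_pow_left hN i
    _ ≤ N ^ i * u := Nat.le_mul_of_pos_right _ (Nat.pos_of_ne_zero hu0)

lemma uP_eq {N : ℕ} (hN : 2 ≤ N) {u : ℕ} (hu : ¬ N ∣ u) (i : ℕ) :
    uP N (N ^ i * u) = u := by
  rw [uP, iP_eq hN hu, Nat.mul_div_cancel_left _ (pow_pos (by omega) i)]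

lemma exists_decomp {N : ℕ} (hN : 2 ≤ N) : ∀ v : ℕ, v ≠ 0 →
    ∃ i u, ¬ N ∣ u ∧ v = N ^ i * u := by
  intro v
  induction v using Nat.strong_induction_on with
  | _ v ih =>
    intro hv
    by_cases h : N ∣ v
    · obtain ⟨w, rfl⟩ := h
      have hw : w ≠ 0 := by rintro rfl; simp at hv
      have hwlt : w < N * w := by
        have := Nat.pos_of_ne_zero hw
        calc w = 1 * w := (one_mul w).symm
          _ < N * w := by
            apply Nat.mul_lt_mul_of_lt_of_le (by omega) (le_refl w) this
      obtain ⟨i, u, hu, rfl⟩ := ih w hwlt hw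
      exact ⟨i + 1, u, hu, by ring⟩
    · exact ⟨0, v, h, by simp⟩

lemma not_dvd_uP {N : ℕ} (hN : 2 ≤ N) {v : ℕ} (hv : v ≠ 0) : ¬ N ∣ uP N v := by
  obtain ⟨i, u, hu, rfl⟩ := exists_decomp hN v hv
  rw [uP_eq hN hu]
  exact hu

lemma uP_ne_zero {N : ℕ} {v : ℕ} (hv : v ≠ 0) : uP N v ≠ 0 := by
  intro h
  have := iP_mul_uP N v
  rw [h, mul_zero] at this
  exact hv this.symm


/-! ### the maps on multiplicity functions -/

def phiF (N : ℕ) (c : ℕ → ℕ) (v : ℕ) : ℕ :=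
  N * c (N * v) + c (uP N v) / N ^ iP N v % N

noncomputable def psiF (n N : ℕ) (c : ℕ → ℕ) (v : ℕ) : ℕ :=
  if N ∣ v then c (v / N) / N
  else ∑ i ∈ Finset.range (n + 1), N ^ i * (c (N ^ i * v) % N)

structure Good (n : ℕ) (c : ℕ → ℕ) : Prop where
  supp : ∀ v, c v ≠ 0 → 1 ≤ v ∧ v ≤ n
  bnd : ∀ v, v * c v ≤ n

lemma Good.le {n : ℕ} {c : ℕ → ℕ} (hc : Good n c) (v : ℕ) : c v ≤ n := by
  by_cases h : c v = 0
  · simp [h]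
  · have h1 := (hc.supp v h).1
    have h2 := hc.bnd v
    calc c v = 1 * c v := (one_mul _).symm
      _ ≤ v * c v := Nat.mul_le_mul_right _ h1
      _ ≤ n := h2

lemma Good.zero {n : ℕ} {c : ℕ → ℕ} (hc : Good n c) : c 0 = 0 := by
  by_contra h
  exact absurd (hc.supp 0 h).1 (by omega)

lemma Good.lt_pow {n N : ℕ} {c : ℕ → ℕ} (hN : 2 ≤ N) (hc : Good n c) (v : ℕ) :
    c v < N ^ (n + 1) := by
  calc c v ≤ n := hc.le v
    _ < 2 ^ (n + 1) := by
        have := Nat.lt_two_pow_self (n := n)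
        have : (2:ℕ) ^ n ≤ 2 ^ (n+1) := Nat.pow_le_pow_right (by omega) (by omega)
        omega
    _ ≤ N ^ (n + 1) := Nat.pow_le_pow_left hN _

/-! ### composition identities -/

lemma psiF_phiF {n N : ℕ} (hN : 2 ≤ N) {c : ℕ → ℕ} (hc : Good n c) (v : ℕ) :
    psiF n N (phiF N c) v = c v := by
  have hNpos : 0 < N := by omega
  by_cases hdvd : N ∣ v
  · obtain ⟨w, rfl⟩ := hdvd
    rw [psiF, if_pos (dvd_mul_right N w), phiF,
      Nat.mul_div_cancel_left _ hNpos, Nat.mul_add_div hNpos,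
      Nat.div_eq_of_lt (Nat.mod_lt _ hNpos), add_zero]
  · have hv0 : v ≠ 0 := by rintro rfl; exact hdvd (dvd_zero N)
    rw [psiF, if_neg hdvd]
    have key : ∀ i, phiF N c (N ^ i * v) % N = c v / N ^ i % N := by
      intro i
      rw [phiF, iP_eq hN hdvd, uP_eq hN hdvd, Nat.mul_add_mod,
        Nat.mod_mod_of_dvd _ (dvd_refl N)]
    simp_rw [key]
    exact digit_sum (n + 1) (c v) (hc.lt_pow hN v)

lemma phiF_psiF {n N : ℕ} (hN : 2 ≤ N) {c : ℕ → ℕ} (hc : Good n c) (v : ℕ) :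
    phiF N (psiF n N c) v = c v := by
  have hNpos : 0 < N := by omega
  rcases eq_or_ne v 0 with rfl | hv0
  · have h3 : psiF n N c 0 = 0 := by
      rw [psiF, if_pos (dvd_zero N), Nat.zero_div, hc.zero, Nat.zero_div]
    have h2 : uP N 0 = 0 := by rw [uP, Nat.zero_div]
    rw [phiF, mul_zero, h3, mul_zero, zero_add, h2, h3, Nat.zero_div,
      Nat.zero_mod, hc.zero]
  · have hu : ¬ N ∣ uP N v := not_dvd_uP hN hv0
    have h1 : psiF n N c (N * v) = c v / N := by
      rw [psiF, if_pos (dvd_mul_right N v), Nat.mul_div_cancel_left _ hNpos]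
    have h2 : psiF n N c (uP N v) / N ^ iP N v % N = c v % N := by
      rw [psiF, if_neg hu,
        digit_extract hNpos (iP N v) _ (fun j => Nat.mod_lt _ hNpos) (n+1)]
      split_ifs with hi
      · rw [iP_mul_uP N v]
      · push_neg at hi
        have hvn : n < v := by
          calc n < 2 ^ (n+1) := by
                have := Nat.lt_two_pow_self (n := n)
                have h2 : (2:ℕ) ^ n ≤ 2 ^ (n+1) := Nat.pow_le_pow_right (by omega) (by omega)
                omega
            _ ≤ N ^ (n+1) := Nat.pow_le_pow_left hN _
            _ ≤ N ^ iP N v := Nat.pow_le_pow_right (by omega) hi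
            _ ≤ N ^ iP N v * uP N v :=
                Nat.le_mul_of_pos_right _ (Nat.pos_of_ne_zero (uP_ne_zero hv0))
            _ = v := iP_mul_uP N v
        have : c v = 0 := by
          by_contra h
          exact absurd (hc.supp v h).2 (by omega)
        simp [this]
    rw [phiF, h1, h2, Nat.div_add_mod]

/-! ### support lemmas -/

lemma phiF_supp {n N : ℕ} (hN : 2 ≤ N) {c : ℕ → ℕ} (hc : Good n c) (v : ℕ)
    (h : phiF N c v ≠ 0) : 1 ≤ v ∧ v ≤ n := by
  have hNpos : 0 < N := by omega
  rw [phiF] at h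
  rcases Nat.eq_zero_or_pos (N * c (N * v)) with h1 | h1
  · rw [h1, zero_add] at h
    have h2 : c (uP N v) / N ^ iP N v ≠ 0 := by
      intro h3; rw [h3] at h; simp at h
    have h3 : N ^ iP N v ≤ c (uP N v) := by
      by_contra h4
      push_neg at h4
      exact h2 (Nat.div_eq_of_lt h4)
    have h4 : c (uP N v) ≠ 0 := by
      have := pow_pos hNpos (iP N v); omega
    have h5 := hc.supp _ h4
    have hv0 : v ≠ 0 := by
      rintro rfl
      rw [uP, Nat.zero_div] at h4
      exact h4 hc.zero
    refine ⟨Nat.pos_of_ne_zero hv0, ?_⟩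
    calc v = N ^ iP N v * uP N v := (iP_mul_uP N v).symm
      _ ≤ c (uP N v) * uP N v := Nat.mul_le_mul_right _ h3
      _ = uP N v * c (uP N v) := mul_comm _ _
      _ ≤ n := hc.bnd _
  · have h2 : c (N * v) ≠ 0 := by
      rintro h3; rw [h3, mul_zero] at h1; omega
    have h3 := hc.supp _ h2
    constructor
    · rcases Nat.eq_zero_or_pos v with rfl | h4
      · rw [mul_zero] at h3; omega
      · exact h4
    · calc v ≤ N * v := Nat.le_mul_of_pos_left _ hNpos
        _ ≤ n := h3.2

lemma psiF_supp {n N : ℕ} (hN : 2 ≤ N) {c : ℕ → ℕ} (hc : Good n c) (v : ℕ)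
    (h : psiF n N c v ≠ 0) : 1 ≤ v ∧ v ≤ n := by
  have hNpos : 0 < N := by omega
  rw [psiF] at h
  split_ifs at h with hdvd
  · have h3 : N ≤ c (v / N) := by
      by_contra h4
      push_neg at h4
      exact h (Nat.div_eq_of_lt h4)
    have h4 : c (v / N) ≠ 0 := by omega
    have h5 := hc.supp _ h4
    obtain ⟨w, rfl⟩ := hdvd
    rw [Nat.mul_div_cancel_left _ hNpos] at h3 h4 h5
    constructor
    · have : 1 ≤ w := h5.1
      calc 1 ≤ w := this
        _ ≤ N * w := Nat.le_mul_of_pos_left _ hNpos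
    · calc N * w = w * N := mul_comm _ _
        _ ≤ w * c w := Nat.mul_le_mul_left _ h3
        _ ≤ n := hc.bnd w
  · obtain ⟨i, -, hi⟩ := Finset.exists_ne_zero_of_sum_ne_zero h
    have h2 : c (N ^ i * v) ≠ 0 := by
      intro h3; rw [h3] at hi; simp at hi
    have h3 := hc.supp _ h2
    have hNi : 0 < N ^ i := pow_pos hNpos i
    constructor
    · rcases Nat.eq_zero_or_pos v with rfl | h4
      · rw [mul_zero] at h3; omega
      · exact h4
    · calc v ≤ N ^ i * v := Nat.le_mul_of_pos_left _ hNi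
        _ ≤ n := h3.2


/-! ### weight preservation -/

lemma phiF_weight {n N : ℕ} (hN : 2 ≤ N) {c : ℕ → ℕ} (hc : Good n c) :
    ∑ v ∈ Finset.Icc 1 n, v * phiF N c v = ∑ v ∈ Finset.Icc 1 n, v * c v := by
  have hNpos : 0 < N := by omega
  have sum1 : ∑ v ∈ Finset.Icc 1 n, v * (N * c (N * v))
      = ∑ w ∈ (Finset.Icc 1 n).filter (fun w => N ∣ w), w * c w := by
    refine (Finset.sum_of_injOn (fun w => w / N) ?_ ?_ ?_ ?_).symm
    · intro a ha b hb hab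
      simp only [Finset.coe_filter, Set.mem_setOf_eq, Finset.mem_Icc] at ha hb
      have hab' : a / N = b / N := hab
      rw [← Nat.div_mul_cancel ha.2, ← Nat.div_mul_cancel hb.2, hab']
    · intro w hw
      simp only [Finset.coe_filter, Set.mem_setOf_eq, Finset.mem_Icc] at hw
      simp only [Finset.coe_Icc, Set.mem_Icc]
      have hNw : N ≤ w := Nat.le_of_dvd (by omega) hw.2
      exact ⟨(Nat.one_le_div_iff hNpos).mpr hNw, le_trans (Nat.div_le_self _ _) hw.1.2⟩
    · intro v hv hvim
      suffices h : c (N * v) = 0 by simp [h]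
      by_contra h
      obtain ⟨h1, h2⟩ := hc.supp _ h
      refine hvim ?_
      refine ⟨N * v, ?_, Nat.mul_div_cancel_left _ hNpos⟩
      simp only [Finset.coe_filter, Set.mem_setOf_eq, Finset.mem_Icc]
      exact ⟨⟨h1, h2⟩, dvd_mul_right _ _⟩
    · intro w hw
      simp only [Finset.mem_filter, Finset.mem_Icc] at hw
      rw [Nat.mul_div_cancel' hw.2, ← mul_assoc, Nat.div_mul_cancel hw.2]
  have sum2 : ∑ v ∈ Finset.Icc 1 n, v * (c (uP N v) / N ^ iP N v % N)
      = ∑ u ∈ (Finset.Icc 1 n).filter (fun u => ¬ N ∣ u), u * c u := by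
    set F := (Finset.Icc 1 n).filter (fun u => ¬ N ∣ u) with hF
    have stepA : ∑ v ∈ Finset.Icc 1 n, v * (c (uP N v) / N ^ iP N v % N)
        = ∑ q ∈ (Finset.range (n+1) ×ˢ F).filter (fun q => N ^ q.1 * q.2 ≤ n),
            (N ^ q.1 * q.2) * (c q.2 / N ^ q.1 % N) := by
      refine (Finset.sum_of_injOn (fun q => N ^ q.1 * q.2) ?_ ?_ ?_ ?_).symm
      · intro a ha b hb hab
        simp only [Finset.coe_filter, Set.mem_setOf_eq, Finset.mem_product,
          Finset.mem_range, hF, Finset.mem_filter, Finset.mem_Icc] at ha hb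
        have hab' : N ^ a.1 * a.2 = N ^ b.1 * b.2 := hab
        have hia : iP N (N ^ a.1 * a.2) = a.1 := iP_eq hN ha.1.2.2 a.1
        have hib : iP N (N ^ b.1 * b.2) = b.1 := iP_eq hN hb.1.2.2 b.1
        have h1 : a.1 = b.1 := by rw [← hia, ← hib, hab']
        have h2 : a.2 = b.2 := by
          rw [h1] at hab'
          exact Nat.eq_of_mul_eq_mul_left (pow_pos hNpos b.1) hab'
        exact Prod.ext h1 h2
      · intro q hq
        simp only [Finset.coe_filter, Set.mem_setOf_eq, Finset.mem_product,
          Finset.mem_range, hF, Finset.mem_filter, Finset.mem_Icc] at hq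
        obtain ⟨⟨hq1, ⟨hq2a, hq2b⟩, hq3⟩, hq4⟩ := hq
        simp only [Finset.coe_Icc, Set.mem_Icc]
        exact ⟨Nat.mul_pos (pow_pos hNpos q.1) (by omega), hq4⟩
      · intro v hv hvim
        exfalso
        rw [Finset.mem_Icc] at hv
        have hv0 : v ≠ 0 := by omega
        have hu := not_dvd_uP hN hv0
        have hu0 : uP N v ≠ 0 := uP_ne_zero hv0
        have hle : N ^ iP N v * uP N v = v := iP_mul_uP N v
        have hup : uP N v ≤ v := by
          calc uP N v ≤ N ^ iP N v * uP N v :=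
            Nat.le_mul_of_pos_left _ (pow_pos hNpos _)
          _ = v := hle
        have hip : iP N v < n + 1 := by
          have h1 : iP N v < 2 ^ iP N v := Nat.lt_two_pow_self
          have h2 : 2 ^ iP N v ≤ N ^ iP N v := Nat.pow_le_pow_left hN _
          have h3 : N ^ iP N v ≤ v := by
            calc N ^ iP N v ≤ N ^ iP N v * uP N v :=
              Nat.le_mul_of_pos_right _ (Nat.pos_of_ne_zero hu0)
            _ = v := hle
          omega
        refine hvim ⟨(iP N v, uP N v), ?_, hle⟩
        simp only [Finset.coe_filter, Set.mem_setOf_eq, Finset.mem_product,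
          Finset.mem_range, hF, Finset.mem_filter, Finset.mem_Icc]
        refine ⟨⟨hip, ⟨⟨Nat.pos_of_ne_zero hu0, le_trans hup hv.2⟩, hu⟩⟩, ?_⟩
        rw [hle]
        exact hv.2
      · intro q hq
        simp only [Finset.mem_filter, Finset.mem_product, Finset.mem_range,
          hF, Finset.mem_Icc] at hq
        rw [iP_eq hN hq.1.2.2 q.1, uP_eq hN hq.1.2.2 q.1]
    have stepB : ∑ q ∈ (Finset.range (n+1) ×ˢ F).filter (fun q => N ^ q.1 * q.2 ≤ n),
            (N ^ q.1 * q.2) * (c q.2 / N ^ q.1 % N)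
        = ∑ q ∈ Finset.range (n+1) ×ˢ F, (N ^ q.1 * q.2) * (c q.2 / N ^ q.1 % N) := by
      refine Finset.sum_subset (Finset.filter_subset _ _) ?_
      intro q hq hnq
      have hgt : n < N ^ q.1 * q.2 := by
        by_contra h
        push_neg at h
        exact hnq (Finset.mem_filter.mpr ⟨hq, h⟩)
      have hbq := hc.bnd q.2
      have hlt : c q.2 < N ^ q.1 := by
        have h1 : q.2 * c q.2 < q.2 * N ^ q.1 := by
          calc q.2 * c q.2 ≤ n := hbq
            _ < N ^ q.1 * q.2 := hgt
            _ = q.2 * N ^ q.1 := mul_comm _ _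
        exact Nat.lt_of_mul_lt_mul_left h1
      rw [Nat.div_eq_of_lt hlt]
      simp
    rw [stepA, stepB, Finset.sum_product, Finset.sum_comm]
    refine Finset.sum_congr rfl ?_
    intro u hu
    have huc : c u < N ^ (n + 1) := hc.lt_pow hN u
    calc ∑ i ∈ Finset.range (n+1), (N ^ i * u) * (c u / N ^ i % N)
        = ∑ i ∈ Finset.range (n+1), u * (N ^ i * (c u / N ^ i % N)) := by
          refine Finset.sum_congr rfl fun i _ => by ring
      _ = u * ∑ i ∈ Finset.range (n+1), N ^ i * (c u / N ^ i % N) := by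
          rw [Finset.mul_sum]
      _ = u * c u := by rw [digit_sum (n+1) (c u) huc]
  calc ∑ v ∈ Finset.Icc 1 n, v * phiF N c v
      = ∑ v ∈ Finset.Icc 1 n, (v * (N * c (N * v)) + v * (c (uP N v) / N ^ iP N v % N)) := by
        refine Finset.sum_congr rfl fun v _ => ?_
        rw [phiF, Nat.mul_add]
    _ = ∑ v ∈ Finset.Icc 1 n, v * (N * c (N * v))
        + ∑ v ∈ Finset.Icc 1 n, v * (c (uP N v) / N ^ iP N v % N) := Finset.sum_add_distrib
    _ = ∑ w ∈ (Finset.Icc 1 n).filter (fun w => N ∣ w), w * c w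
        + ∑ u ∈ (Finset.Icc 1 n).filter (fun u => ¬ N ∣ u), u * c u := by rw [sum1, sum2]
    _ = ∑ v ∈ Finset.Icc 1 n, v * c v := Finset.sum_filter_add_sum_filter_not _ _ _


/-! ### goodness of psiF -/

lemma good_psiF {n N : ℕ} (hN : 2 ≤ N) {c : ℕ → ℕ} (hc : Good n c)
    (ht : ∑ v ∈ Finset.Icc 1 n, v * c v ≤ n) : Good n (psiF n N c) where
  supp := psiF_supp hN hc
  bnd := by
    intro v
    have hNpos : 0 < N := by omega
    rw [psiF]
    split_ifs with hdvd
    · obtain ⟨w, rfl⟩ := hdvd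
      rw [Nat.mul_div_cancel_left _ hNpos]
      calc N * w * (c w / N) = w * (c w / N * N) := by ring
        _ ≤ w * c w := Nat.mul_le_mul_left _ (Nat.div_mul_le_self _ _)
        _ ≤ n := hc.bnd w
    · rcases eq_or_ne v 0 with rfl | hv0
      · simp
      calc v * ∑ i ∈ Finset.range (n+1), N ^ i * (c (N ^ i * v) % N)
          = ∑ i ∈ Finset.range (n+1), (N ^ i * v) * (c (N ^ i * v) % N) := by
            rw [Finset.mul_sum]
            exact Finset.sum_congr rfl fun i _ => by ring
        _ ≤ ∑ i ∈ Finset.range (n+1), (N ^ i * v) * c (N ^ i * v) :=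
            Finset.sum_le_sum fun i _ => Nat.mul_le_mul_left _ (Nat.mod_le _ _)
        _ ≤ n := by
            set S := (Finset.range (n+1)).filter (fun i => N ^ i * v ∈ Finset.Icc 1 n) with hS
            have e1 : ∑ i ∈ Finset.range (n+1), (N ^ i * v) * c (N ^ i * v)
                = ∑ i ∈ S, (N ^ i * v) * c (N ^ i * v) := by
              refine (Finset.sum_subset (Finset.filter_subset _ _) ?_).symm
              intro i hi hni
              have hmem : N ^ i * v ∉ Finset.Icc 1 n := by
                intro h
                exact hni (Finset.mem_filter.mpr ⟨hi, h⟩)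
              have : c (N ^ i * v) = 0 := by
                by_contra h
                exact hmem (Finset.mem_Icc.mpr (hc.supp _ h))
              simp [this]
            have e2 : ∑ w ∈ S.image (fun i => N ^ i * v), w * c w
                = ∑ i ∈ S, (N ^ i * v) * c (N ^ i * v) :=
              Finset.sum_image fun a _ b _ hab =>
                Nat.pow_right_injective hN
                  (Nat.eq_of_mul_eq_mul_right (Nat.pos_of_ne_zero hv0) hab)
            have e3 : S.image (fun i => N ^ i * v) ⊆ Finset.Icc 1 n := by
              intro w hw
              obtain ⟨i, hi, rfl⟩ := Finset.mem_image.mp hw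
              exact (Finset.mem_filter.mp hi).2
            calc ∑ i ∈ Finset.range (n+1), (N ^ i * v) * c (N ^ i * v)
                = ∑ w ∈ S.image (fun i => N ^ i * v), w * c w := by rw [e1, ← e2]
              _ ≤ ∑ w ∈ Finset.Icc 1 n, w * c w := Finset.sum_le_sum_of_subset e3
              _ ≤ n := ht

lemma psiF_weight {n N : ℕ} (hN : 2 ≤ N) {c : ℕ → ℕ} (hc : Good n c)
    (ht : ∑ v ∈ Finset.Icc 1 n, v * c v = n) :
    ∑ v ∈ Finset.Icc 1 n, v * psiF n N c v = n := by
  have hg : Good n (psiF n N c) := good_psiF hN hc ht.le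
  have h1 := phiF_weight hN hg
  have h2 : ∑ v ∈ Finset.Icc 1 n, v * phiF N (psiF n N c) v
      = ∑ v ∈ Finset.Icc 1 n, v * c v :=
    Finset.sum_congr rfl fun v _ => by rw [phiF_psiF hN hc]
  rw [← h1, h2, ht]

/-! ### statistics -/

lemma phiF_stat {n N : ℕ} (hN : 2 ≤ N) {c : ℕ → ℕ} (hc : Good n c) :
    ((Finset.Icc 1 n).filter fun v => N ≤ phiF N c v).card
      = ((Finset.Icc 1 n).filter fun v => N ∣ v ∧ c v ≠ 0).card := by
  classical
  have hNpos : 0 < N := by omega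
  have key : ∀ v, N ≤ phiF N c v ↔ c (N * v) ≠ 0 := by
    intro v
    rw [phiF]
    constructor
    · intro h h0
      rw [h0, mul_zero, zero_add] at h
      exact absurd h (not_le.mpr (Nat.mod_lt _ hNpos))
    · intro h0
      calc N = N * 1 := (mul_one N).symm
        _ ≤ N * c (N * v) := Nat.mul_le_mul_left N (Nat.pos_of_ne_zero h0)
        _ ≤ _ := Nat.le_add_right _ _
  refine Finset.card_nbij (fun v => N * v) ?_ ?_ ?_
  · intro v hv
    simp only [Finset.coe_filter, Set.mem_setOf_eq, Finset.mem_filter, Finset.mem_Icc] at hv ⊢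
    have h0 : c (N * v) ≠ 0 := (key v).mp hv.2
    exact ⟨hc.supp _ h0, dvd_mul_right _ _, h0⟩
  · intro a _ b _ hab
    exact Nat.eq_of_mul_eq_mul_left hNpos hab
  · intro w hw
    simp only [Finset.coe_filter, Set.mem_setOf_eq, Finset.mem_Icc] at hw
    obtain ⟨⟨hw1, hw2⟩, hwd, hw0⟩ := hw
    refine ⟨w / N, ?_, Nat.mul_div_cancel' hwd⟩
    simp only [Finset.coe_filter, Set.mem_setOf_eq, Finset.mem_Icc]
    have hNw : N ≤ w := Nat.le_of_dvd (by omega) hwd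
    refine ⟨⟨(Nat.one_le_div_iff hNpos).mpr hNw, le_trans (Nat.div_le_self _ _) hw2⟩, ?_⟩
    refine (key _).mpr ?_
    rw [Nat.mul_div_cancel' hwd]
    exact hw0
lemma psiF_stat {n N : ℕ} (hN : 2 ≤ N) {c : ℕ → ℕ} (hc : Good n c) :
    ((Finset.Icc 1 n).filter fun v => N ∣ v ∧ psiF n N c v ≠ 0).card
      = ((Finset.Icc 1 n).filter fun v => N ≤ c v).card := by
  classical
  have hNpos : 0 < N := by omega
  have key : ∀ v, N ∣ v → (psiF n N c v ≠ 0 ↔ N ≤ c (v / N)) := by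
    intro v hdvd
    rw [psiF, if_pos hdvd]
    constructor
    · intro h
      by_contra h4
      push_neg at h4
      exact h (Nat.div_eq_of_lt h4)
    · intro h
      have h1 : 1 ≤ c (v / N) / N := (Nat.one_le_div_iff hNpos).mpr h
      omega
  refine Finset.card_nbij (fun v => v / N) ?_ ?_ ?_
  · intro v hv
    simp only [Finset.coe_filter, Set.mem_setOf_eq, Finset.mem_filter, Finset.mem_Icc] at hv ⊢
    obtain ⟨⟨hv1, hv2⟩, hvd, hv0⟩ := hv
    have hle : N ≤ c (v / N) := (key v hvd).mp hv0
    have hNv : N ≤ v := Nat.le_of_dvd (by omega) hvd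
    exact ⟨⟨(Nat.one_le_div_iff hNpos).mpr hNv, le_trans (Nat.div_le_self _ _) hv2⟩, hle⟩
  · intro a ha b hb hab
    simp only [Finset.coe_filter, Set.mem_setOf_eq, Finset.mem_Icc] at ha hb
    have hab' : a / N = b / N := hab
    rw [← Nat.div_mul_cancel ha.2.1, ← Nat.div_mul_cancel hb.2.1, hab']
  · intro w hw
    simp only [Finset.coe_filter, Set.mem_setOf_eq, Finset.mem_Icc] at hw
    obtain ⟨⟨hw1, hw2⟩, hwle⟩ := hw
    refine ⟨N * w, ?_, Nat.mul_div_cancel_left _ hNpos⟩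
    simp only [Finset.coe_filter, Set.mem_setOf_eq, Finset.mem_Icc]
    have hb := hc.bnd w
    have hwn : N * w ≤ n := by
      calc N * w = w * N := mul_comm _ _
        _ ≤ w * c w := Nat.mul_le_mul_left _ hwle
        _ ≤ n := hb
    refine ⟨⟨Nat.mul_pos (by omega) (by omega), hwn⟩, dvd_mul_right _ _, ?_⟩
    refine (key _ (dvd_mul_right _ _)).mpr ?_
    rw [Nat.mul_div_cancel_left _ hNpos]
    exact hwle

/-! ### multiset layer -/

def toM (n : ℕ) (f : ℕ → ℕ) : Multiset ℕ :=
  (Finset.Icc 1 n).val.bind fun v => Multiset.replicate (f v) v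

lemma count_toM (n : ℕ) (f : ℕ → ℕ) (w : ℕ) :
    (toM n f).count w = if w ∈ Finset.Icc 1 n then f w else 0 := by
  rw [toM, Multiset.count_bind]
  have h : ((Finset.Icc 1 n).val.map fun v => (Multiset.replicate (f v) v).count w).sum
      = ∑ v ∈ Finset.Icc 1 n, (Multiset.replicate (f v) v).count w := rfl
  rw [h]
  simp_rw [Multiset.count_replicate]
  exact Finset.sum_ite_eq' (Finset.Icc 1 n) w f

lemma sum_toM (n : ℕ) (f : ℕ → ℕ) :
    (toM n f).sum = ∑ v ∈ Finset.Icc 1 n, v * f v := by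
  rw [toM, Multiset.sum_bind]
  have h : ((Finset.Icc 1 n).val.map fun v => (Multiset.replicate (f v) v).sum).sum
      = ∑ v ∈ Finset.Icc 1 n, (Multiset.replicate (f v) v).sum := rfl
  rw [h]
  refine Finset.sum_congr rfl fun v _ => ?_
  rw [Multiset.sum_replicate, smul_eq_mul, mul_comm]

lemma mem_toM_pos {n : ℕ} {f : ℕ → ℕ} {w : ℕ} (h : w ∈ toM n f) : 0 < w := by
  rw [toM, Multiset.mem_bind] at h
  obtain ⟨v, hv, hw⟩ := h
  rw [Multiset.eq_of_mem_replicate hw]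
  exact (Finset.mem_Icc.mp (Finset.mem_val.mp hv)).1

lemma multiset_sum_eq (s : Multiset ℕ) (F : Finset ℕ) (h : ∀ v ∈ s, v ∈ F) :
    s.sum = ∑ v ∈ F, v * s.count v := by
  induction s using Multiset.induction_on with
  | empty => simp
  | cons a s ih =>
    have ha : a ∈ F := h a (Multiset.mem_cons_self a s)
    have hs : ∀ v ∈ s, v ∈ F := fun v hv => h v (Multiset.mem_cons_of_mem hv)
    rw [Multiset.sum_cons, ih hs]
    simp_rw [Multiset.count_cons, Nat.mul_add, Finset.sum_add_distrib, mul_ite, mul_one, mul_zero]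
    rw [Finset.sum_ite_eq' F a (fun v => v), if_pos ha]
    omega

/-! ### partition layer -/

def cnt {n : ℕ} (q : n.Partition) : ℕ → ℕ := fun v => q.parts.count v

lemma good_cnt {n : ℕ} (q : n.Partition) : Good n (cnt q) where
  supp := fun v h => by
    have hv : v ∈ q.parts := Multiset.count_ne_zero.mp h
    refine ⟨q.parts_pos hv, ?_⟩
    rw [← q.parts_sum]
    exact Multiset.single_le_sum (fun x _ => Nat.zero_le x) v hv
  bnd := fun v => by
    have h1 : Multiset.replicate (q.parts.count v) v ≤ q.parts :=
      Multiset.le_count_iff_replicate_le.mp le_rfl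
    obtain ⟨t, ht⟩ := Multiset.le_iff_exists_add.mp h1
    calc v * cnt q v = (Multiset.replicate (q.parts.count v) v).sum := by
          rw [Multiset.sum_replicate, smul_eq_mul, mul_comm]; rfl
      _ ≤ q.parts.sum := by
          conv_rhs => rw [ht]
          rw [Multiset.sum_add]
          exact Nat.le_add_right _ _
      _ = n := q.parts_sum

lemma cnt_total {n : ℕ} (q : n.Partition) :
    ∑ v ∈ Finset.Icc 1 n, v * cnt q v = n := by
  have h : ∀ v ∈ q.parts, v ∈ Finset.Icc 1 n := by
    intro v hv
    refine Finset.mem_Icc.mpr ⟨q.parts_pos hv, ?_⟩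
    rw [← q.parts_sum]
    exact Multiset.single_le_sum (fun x _ => Nat.zero_le x) v hv
  exact (multiset_sum_eq q.parts _ h).symm.trans q.parts_sum

def phiP {n N : ℕ} (hN : 2 ≤ N) (q : n.Partition) : n.Partition where
  parts := toM n (phiF N (cnt q))
  parts_pos := fun h => mem_toM_pos h
  parts_sum := by rw [sum_toM, phiF_weight hN (good_cnt q), cnt_total]

noncomputable def psiP {n N : ℕ} (hN : 2 ≤ N) (q : n.Partition) : n.Partition where
  parts := toM n (psiF n N (cnt q))
  parts_pos := fun h => mem_toM_pos h
  parts_sum := by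
    rw [sum_toM]
    exact psiF_weight hN (good_cnt q) (cnt_total q)

lemma cnt_phiP {n N : ℕ} (hN : 2 ≤ N) (q : n.Partition) :
    cnt (phiP hN q) = phiF N (cnt q) := by
  funext w
  show (toM n (phiF N (cnt q))).count w = _
  rw [count_toM]
  split_ifs with h
  · rfl
  · symm
    by_contra h0
    exact h (Finset.mem_Icc.mpr (phiF_supp hN (good_cnt q) w h0))

lemma cnt_psiP {n N : ℕ} (hN : 2 ≤ N) (q : n.Partition) :
    cnt (psiP hN q) = psiF n N (cnt q) := by
  funext w
  show (toM n (psiF n N (cnt q))).count w = _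
  rw [count_toM]
  split_ifs with h
  · rfl
  · symm
    by_contra h0
    exact h (Finset.mem_Icc.mpr (psiF_supp hN (good_cnt q) w h0))

lemma psiP_phiP {n N : ℕ} (hN : 2 ≤ N) (q : n.Partition) :
    psiP hN (phiP hN q) = q := by
  refine Nat.Partition.ext ?_
  refine Multiset.ext.mpr fun w => ?_
  have h1 : (psiP hN (phiP hN q)).parts.count w = cnt (psiP hN (phiP hN q)) w := rfl
  rw [h1, cnt_psiP hN (phiP hN q), cnt_phiP hN q]
  exact psiF_phiF hN (good_cnt q) w

lemma phiP_psiP {n N : ℕ} (hN : 2 ≤ N) (q : n.Partition) :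
    phiP hN (psiP hN q) = q := by
  refine Nat.Partition.ext ?_
  refine Multiset.ext.mpr fun w => ?_
  have h1 : (phiP hN (psiP hN q)).parts.count w = cnt (phiP hN (psiP hN q)) w := rfl
  rw [h1, cnt_phiP hN (psiP hN q), cnt_psiP hN q]
  exact phiF_psiF hN (good_cnt q) w

end GlaisherAux

open GlaisherAux

open scoped Classical in
theorem pow_two_values_eq_high_multiplicity_values (n k p : ℕ)
    (hn : 0 < n) (hk : 0 < k) (hp : 2 ≤ p) :
    (Finset.univ.filter fun q : n.Partition =>
        (q.parts.toFinset.filter fun i => 2 ^ p ∣ i).card = k).card =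
      (Finset.univ.filter fun q : n.Partition =>
        (q.parts.toFinset.filter fun i => 2 ^ p ≤ q.parts.count i).card = k).card := by
  have hN : 2 ≤ 2 ^ p := by
    calc (2:ℕ) = 2 ^ 1 := (pow_one 2).symm
      _ ≤ 2 ^ p := Nat.pow_le_pow_right (by omega) (by omega)
  -- key card identities
  have keyB : ∀ q : n.Partition,
      ((phiP hN q).parts.toFinset.filter fun i => 2 ^ p ≤ (phiP hN q).parts.count i).card
        = (q.parts.toFinset.filter fun i => 2 ^ p ∣ i).card := by
    intro q
    have e1 : ((phiP hN q).parts.toFinset.filter fun i => 2 ^ p ≤ (phiP hN q).parts.count i)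
        = (Finset.Icc 1 n).filter fun v => 2 ^ p ≤ phiF (2 ^ p) (cnt q) v := by
      ext v
      simp only [Finset.mem_filter, Multiset.mem_toFinset, Finset.mem_Icc]
      constructor
      · rintro ⟨hv, hle⟩
        have h0 : cnt (phiP hN q) v ≠ 0 := Multiset.count_ne_zero.mpr hv
        have hle' : 2 ^ p ≤ cnt (phiP hN q) v := hle
        rw [cnt_phiP hN q] at h0 hle'
        exact ⟨phiF_supp hN (good_cnt q) v h0, hle'⟩
      · rintro ⟨hIcc, hle⟩
        have hle' : 2 ^ p ≤ cnt (phiP hN q) v := by rw [cnt_phiP hN q]; exact hle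
        have h0 : cnt (phiP hN q) v ≠ 0 := by omega
        exact ⟨Multiset.count_ne_zero.mp h0, hle'⟩
    have e3 : ((Finset.Icc 1 n).filter fun v => 2 ^ p ∣ v ∧ cnt q v ≠ 0)
        = q.parts.toFinset.filter fun i => 2 ^ p ∣ i := by
      ext v
      simp only [Finset.mem_filter, Multiset.mem_toFinset, Finset.mem_Icc]
      constructor
      · rintro ⟨hIcc, hd, h0⟩
        exact ⟨Multiset.count_ne_zero.mp h0, hd⟩
      · rintro ⟨hv, hd⟩
        have h0 : cnt q v ≠ 0 := Multiset.count_ne_zero.mpr hv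
        exact ⟨(good_cnt q).supp v h0, hd, h0⟩
    rw [e1, phiF_stat hN (good_cnt q), e3]
  have keyA : ∀ q : n.Partition,
      ((psiP hN q).parts.toFinset.filter fun i => 2 ^ p ∣ i).card
        = (q.parts.toFinset.filter fun i => 2 ^ p ≤ q.parts.count i).card := by
    intro q
    have e1 : ((psiP hN q).parts.toFinset.filter fun i => 2 ^ p ∣ i)
        = (Finset.Icc 1 n).filter fun v => 2 ^ p ∣ v ∧ psiF n (2 ^ p) (cnt q) v ≠ 0 := by
      ext v
      simp only [Finset.mem_filter, Multiset.mem_toFinset, Finset.mem_Icc]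
      constructor
      · rintro ⟨hv, hd⟩
        have h0 : cnt (psiP hN q) v ≠ 0 := Multiset.count_ne_zero.mpr hv
        rw [cnt_psiP hN q] at h0
        exact ⟨psiF_supp hN (good_cnt q) v h0, hd, h0⟩
      · rintro ⟨hIcc, hd, h0⟩
        have h0' : cnt (psiP hN q) v ≠ 0 := by rw [cnt_psiP hN q]; exact h0
        exact ⟨Multiset.count_ne_zero.mp h0', hd⟩
    have e3 : ((Finset.Icc 1 n).filter fun v => 2 ^ p ≤ cnt q v)
        = q.parts.toFinset.filter fun i => 2 ^ p ≤ q.parts.count i := by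
      ext v
      simp only [Finset.mem_filter, Multiset.mem_toFinset, Finset.mem_Icc]
      constructor
      · rintro ⟨hIcc, hle⟩
        have h0 : cnt q v ≠ 0 := by omega
        exact ⟨Multiset.count_ne_zero.mp h0, hle⟩
      · rintro ⟨hv, hle⟩
        have h0 : cnt q v ≠ 0 := Multiset.count_ne_zero.mpr hv
        exact ⟨(good_cnt q).supp v h0, hle⟩
    rw [e1, psiF_stat hN (good_cnt q), e3]
  refine Finset.card_bij' (fun q _ => phiP hN q) (fun q _ => psiP hN q) ?_ ?_ ?_ ?_
  · intro q hq
    simp only [Finset.mem_filter, Finset.mem_univ, true_and] at hq ⊢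
    rw [keyB q]
    exact hq
  · intro q hq
    simp only [Finset.mem_filter, Finset.mem_univ, true_and] at hq ⊢
    rw [keyA q]
    exact hq
  · intro q _
    exact psiP_phiP hN q
  · intro q _
    exact phiP_psiP hN q
end

section
/- For every positive integer n, the total number of parts counted over all partitions of n into odd parts is greater than or equal to the total number of parts counted over all partitions of n into distinct parts. -/
open Multiset Nat

namespace GlaisherAux

/-- split a part `a = 2^k * o` into `2^k` copies of `o` -/
def split (a : ℕ) : Multiset ℕ :=
  Multiset.replicate (ordProj[2] a) (ordCompl[2] a)

lemma sum_split (a : ℕ) (ha : a ≠ 0) : (split a).sum = a := by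
  simp only [split, Multiset.sum_replicate, smul_eq_mul]
  exact Nat.ordProj_mul_ordCompl_eq_self a 2

/-- The inverse Glaisher map on partitions. -/
def psi {n : ℕ} (p : n.Partition) : n.Partition where
  parts := p.parts.bind split
  parts_pos := by
    intro i hi
    rw [Multiset.mem_bind] at hi
    obtain ⟨a, ha, hi⟩ := hi
    rw [split] at hi
    rw [Multiset.eq_of_mem_replicate hi]
    exact Nat.ordCompl_pos 2 (p.parts_pos ha).ne'
  parts_sum := by
    rw [Multiset.sum_bind,
      Multiset.map_congr rfl (fun a ha => sum_split a (p.parts_pos ha).ne'),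
      Multiset.map_id', p.parts_sum]

lemma psi_mem_odds {n : ℕ} (p : n.Partition) : psi p ∈ Nat.Partition.odds n := by
  simp only [Nat.Partition.odds, Nat.Partition.restricted, Finset.mem_filter, Finset.mem_univ, true_and]
  intro i hi
  rw [psi] at hi
  simp only [Multiset.mem_bind] at hi
  obtain ⟨a, ha, hi⟩ := hi
  rw [split] at hi
  rw [Multiset.eq_of_mem_replicate hi]
  intro he
  exact Nat.not_dvd_ordCompl Nat.prime_two (p.parts_pos ha).ne' he.two_dvd

lemma card_le_card_psi {n : ℕ} (p : n.Partition) :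
    Multiset.card p.parts ≤ Multiset.card (psi p).parts := by
  rw [psi]
  simp only [Multiset.card_bind]
  calc Multiset.card p.parts = (p.parts.map (fun _ => 1)).sum := by
        simp [Multiset.sum_replicate]
    _ ≤ (p.parts.map (Multiset.card ∘ split)).sum := by
        apply Multiset.sum_map_le_sum_map
        intro a _
        simp only [Function.comp_apply, split, Multiset.card_replicate]
        exact Nat.one_le_two_pow

/-- the count of an odd number `o` in `(psi p).parts`, for `p` with nodup parts -/
lemma count_psi {n : ℕ} (p : n.Partition) (hp : p.parts.Nodup) (o : ℕ) :
    (psi p).parts.count o =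
      ∑ k ∈ ((p.parts.toFinset.filter (fun a => ordCompl[2] a = o)).image
          (fun a => a.factorization 2)), 2 ^ k := by
  classical
  rw [Finset.sum_image]
  · rw [psi]
    simp only [Multiset.count_bind]
    have h1 : ∀ a : ℕ, (split a).count o =
        if ordCompl[2] a = o then 2 ^ (a.factorization 2) else 0 := by
      intro a
      rw [split, Multiset.count_replicate]
    rw [Multiset.map_congr rfl (fun a _ => h1 a)]
    rw [Finset.sum_filter]
    rw [Finset.sum]
    congr 1
    rw [Multiset.toFinset_val, hp.dedup]
  · intro a ha b hb hab
    simp only [Finset.mem_coe, Finset.mem_filter] at ha hb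
    have h2 := Nat.ordProj_mul_ordCompl_eq_self a 2
    have h3 := Nat.ordProj_mul_ordCompl_eq_self b 2
    rw [ha.2] at h2
    rw [hb.2] at h3
    rw [← h2, ← h3, show a.factorization 2 = b.factorization 2 from hab]

lemma psi_injOn {n : ℕ} : Set.InjOn psi (Nat.Partition.distincts n : Set (n.Partition)) := by
  intro p hp q hq h
  simp only [Finset.coe_filter, Nat.Partition.distincts, Set.mem_setOf_eq,
    Finset.mem_coe, Finset.mem_filter] at hp hq
  have hpn : p.parts.Nodup := by
    simpa [Nat.Partition.distincts] using hp
  have hqn : q.parts.Nodup := by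
    simpa [Nat.Partition.distincts] using hq
  -- the exponent sets agree
  have hE : ∀ o : ℕ,
      ((p.parts.toFinset.filter (fun a => ordCompl[2] a = o)).image (fun a => a.factorization 2)) =
      ((q.parts.toFinset.filter (fun a => ordCompl[2] a = o)).image (fun a => a.factorization 2)) := by
    intro o
    apply Finset.geomSum_injective (le_refl 2)
    simp only
    rw [← count_psi p hpn o, ← count_psi q hqn o, h]
  -- membership transfer
  have hmem : ∀ a : ℕ, a ∈ p.parts ↔ a ∈ q.parts := by
    have key : ∀ (r s : n.Partition) (hr : r.parts.Nodup) (hs : s.parts.Nodup),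
        (∀ o : ℕ,
          ((r.parts.toFinset.filter (fun a => ordCompl[2] a = o)).image (fun a => a.factorization 2)) =
          ((s.parts.toFinset.filter (fun a => ordCompl[2] a = o)).image (fun a => a.factorization 2)))
        → ∀ a : ℕ, a ∈ r.parts → a ∈ s.parts := by
      intro r s hr hs hEq a ha
      have h1 : a.factorization 2 ∈
          ((r.parts.toFinset.filter (fun a' => ordCompl[2] a' = ordCompl[2] a)).image
            (fun a' => a'.factorization 2)) := by
        apply Finset.mem_image_of_mem
        rw [Finset.mem_filter]
        exact ⟨by rwa [Multiset.mem_toFinset], rfl⟩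
      rw [hEq (ordCompl[2] a)] at h1
      obtain ⟨b, hb, hba⟩ := Finset.mem_image.mp h1
      rw [Finset.mem_filter, Multiset.mem_toFinset] at hb
      have hab : b = a := by
        have h2 := Nat.ordProj_mul_ordCompl_eq_self b 2
        rw [hb.2, hba, Nat.ordProj_mul_ordCompl_eq_self a 2] at h2
        exact h2.symm
      exact hab ▸ hb.1
    intro a
    exact ⟨key p q hpn hqn hE a, key q p hqn hpn (fun o => (hE o).symm) a⟩
  apply Nat.Partition.ext
  apply Multiset.Nodup.toFinset_inj hpn hqn
  ext a
  simp only [Multiset.mem_toFinset]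
  exact hmem a

end GlaisherAux

theorem odds_parts_ge_distincts_parts (n : ℕ) (hn : 0 < n) :
    ∑ p ∈ Nat.Partition.distincts n, Multiset.card p.parts ≤
      ∑ p ∈ Nat.Partition.odds n, Multiset.card p.parts := by
  classical
  calc ∑ p ∈ Nat.Partition.distincts n, Multiset.card p.parts
      ≤ ∑ p ∈ Nat.Partition.distincts n, Multiset.card (GlaisherAux.psi p).parts :=
        Finset.sum_le_sum fun p _ => GlaisherAux.card_le_card_psi p
    _ = ∑ q ∈ (Nat.Partition.distincts n).image GlaisherAux.psi, Multiset.card q.parts := by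
        rw [Finset.sum_image fun p hp q hq h => GlaisherAux.psi_injOn hp hq h]
    _ ≤ ∑ p ∈ Nat.Partition.odds n, Multiset.card p.parts := by
        apply Finset.sum_le_sum_of_subset
        intro q hq
        obtain ⟨p, _, rfl⟩ := Finset.mem_image.mp hq
        exact GlaisherAux.psi_mem_odds p
end

section
/- For every positive integer n, the total number of parts counted over all partitions of n into distinct parts is greater than or equal to the total number of distinct part values counted over all partitions of n into odd parts. -/
open Multiset

namespace GlaisherAux

/-- Glaisher-type map on multisets: split each value's multiplicity into binary. -/
def gl (s : Multiset ℕ) : Multiset ℕ :=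
  s.toFinset.val.bind fun a => ((s.count a).bitIndices.map fun i => 2 ^ i * a : List ℕ)

lemma odd_pos' {a : ℕ} (ha : Odd a) : 0 < a := by
  rcases Nat.eq_zero_or_pos a with h | h
  · subst h; simp at ha
  · exact h

lemma pow_mul_inj {a a' i j : ℕ} (ha : Odd a) (ha' : Odd a')
    (h : 2 ^ i * a = 2 ^ j * a') : i = j ∧ a = a' := by
  have ha0 : a ≠ 0 := (odd_pos' ha).ne'
  have ha0' : a' ≠ 0 := (odd_pos' ha').ne'
  have hda : ¬ (2 ∣ a) := Nat.two_dvd_ne_zero.mpr (Nat.odd_iff.mp ha)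
  have hda' : ¬ (2 ∣ a') := Nat.two_dvd_ne_zero.mpr (Nat.odd_iff.mp ha')
  have hfa : a.factorization 2 = 0 := Nat.factorization_eq_zero_of_not_dvd hda
  have hfa' : a'.factorization 2 = 0 := Nat.factorization_eq_zero_of_not_dvd hda'
  have hij : i = j := by
    have := congrArg (fun m => m.factorization 2) h
    simpa [Nat.factorization_mul (pow_ne_zero i (by norm_num : (2:ℕ) ≠ 0)) ha0,
      Nat.factorization_mul (pow_ne_zero j (by norm_num : (2:ℕ) ≠ 0)) ha0',
      Nat.Prime.factorization_pow, Nat.prime_two, hfa, hfa'] using this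
  subst hij
  exact ⟨rfl, Nat.eq_of_mul_eq_mul_left (by positivity) h⟩

lemma mem_gl {s : Multiset ℕ} {b : ℕ} :
    b ∈ gl s ↔ ∃ a ∈ s.toFinset, ∃ i ∈ (s.count a).bitIndices, b = 2 ^ i * a := by
  simp only [gl, Multiset.mem_bind, Finset.mem_val]
  constructor
  · rintro ⟨a, ha, hb⟩
    rw [Multiset.mem_coe, List.mem_map] at hb
    obtain ⟨i, hi, rfl⟩ := hb
    exact ⟨a, ha, i, hi, rfl⟩
  · rintro ⟨a, ha, i, hi, rfl⟩
    exact ⟨a, ha, by rw [Multiset.mem_coe, List.mem_map]; exact ⟨i, hi, rfl⟩⟩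

lemma pow_mul_mem_gl {s : Multiset ℕ} (hs : ∀ x ∈ s, Odd x) {a i : ℕ} (ha : Odd a) :
    2 ^ i * a ∈ gl s ↔ i ∈ (s.count a).bitIndices := by
  constructor
  · intro h
    obtain ⟨a', ha', i', hi', he⟩ := mem_gl.mp h
    have hodd' : Odd a' := hs a' (Multiset.mem_toFinset.mp ha')
    obtain ⟨hij, haa⟩ := pow_mul_inj hodd' ha he.symm
    rw [← hij, ← haa]; exact hi'
  · intro h
    have hc : 0 < s.count a := lt_of_lt_of_le (pow_pos (by norm_num) i)
      (Nat.two_pow_le_of_mem_bitIndices h)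
    exact mem_gl.mpr ⟨a, Multiset.mem_toFinset.mpr (Multiset.count_pos.mp hc), i, h, rfl⟩

lemma sum_gl (s : Multiset ℕ) : (gl s).sum = s.sum := by
  rw [gl, Multiset.sum_bind]
  have h1 : ∀ a ∈ s.toFinset.val,
      (((s.count a).bitIndices.map fun i => 2 ^ i * a : List ℕ) : Multiset ℕ).sum
        = s.count a * a := by
    intro a _
    rw [Multiset.sum_coe, List.sum_map_mul_right, Nat.twoPowSum_bitIndices]
  rw [Multiset.map_congr rfl h1]
  have h2 : (Multiset.map (fun a => s.count a * a) s.toFinset.val).sum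
      = ∑ a ∈ s.toFinset, s.count a * a := rfl
  rw [h2, Finset.sum_multiset_count s]
  simp [smul_eq_mul]

lemma nodup_gl {s : Multiset ℕ} (hs : ∀ x ∈ s, Odd x) : (gl s).Nodup := by
  rw [gl, Multiset.nodup_bind]
  constructor
  · intro a ha
    have hodd : Odd a := hs a (Multiset.mem_toFinset.mp (Finset.mem_val.mp ha))
    rw [Multiset.coe_nodup]
    exact (Nat.bitIndices_sorted (n := s.count a)).nodup.map
      (fun i j hij => (pow_mul_inj hodd hodd hij).1)
  · refine Multiset.Nodup.pairwise ?_ s.toFinset.nodup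
    intro a ha b hb hab
    rw [Function.onFun, Multiset.disjoint_left]
    rintro x hx hx'
    rw [Multiset.mem_coe, List.mem_map] at hx hx'
    obtain ⟨i, _, rfl⟩ := hx
    obtain ⟨j, _, hj⟩ := hx'
    have hodda : Odd a := hs a (Multiset.mem_toFinset.mp (Finset.mem_val.mp ha))
    have hoddb : Odd b := hs b (Multiset.mem_toFinset.mp (Finset.mem_val.mp hb))
    exact hab ((pow_mul_inj hoddb hodda hj).2).symm

lemma pos_gl {s : Multiset ℕ} (hs : ∀ x ∈ s, Odd x) : ∀ b ∈ gl s, 0 < b := by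
  intro b hb
  obtain ⟨a, ha, i, _, rfl⟩ := mem_gl.mp hb
  have := odd_pos' (hs a (Multiset.mem_toFinset.mp ha))
  positivity

lemma card_gl (s : Multiset ℕ) : s.toFinset.card ≤ Multiset.card (gl s) := by
  rw [gl, Multiset.card_bind]
  have h2 : (Multiset.map (fun a => Multiset.card
      (((s.count a).bitIndices.map fun i => 2 ^ i * a : List ℕ) : Multiset ℕ)) s.toFinset.val).sum
      = ∑ a ∈ s.toFinset, ((s.count a).bitIndices.map fun i => 2 ^ i * a).length := rfl
  rw [show (Multiset.map (Multiset.card ∘ fun a =>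
      (((s.count a).bitIndices.map fun i => 2 ^ i * a : List ℕ) : Multiset ℕ)) s.toFinset.val)
      = _ from rfl]
  calc s.toFinset.card = ∑ _a ∈ s.toFinset, 1 := by simp
    _ ≤ _ := by
        refine Finset.sum_le_sum ?_
        intro a ha
        simp only [Function.comp_apply, Multiset.coe_card, List.length_map]
        have hc : s.count a ≠ 0 := Multiset.count_ne_zero.mpr (Multiset.mem_toFinset.mp ha)
        have : (s.count a).bitIndices ≠ [] := by
          intro h
          apply hc
          have := Nat.twoPowSum_bitIndices (s.count a)
          rw [h] at this; simpa using this.symm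
        exact List.length_pos_iff.mpr this

lemma gl_injOn {s t : Multiset ℕ} (hs : ∀ x ∈ s, Odd x) (ht : ∀ x ∈ t, Odd x)
    (h : gl s = gl t) : s = t := by
  ext a
  by_cases ha : Odd a
  · have hfin : (s.count a).bitIndices.toFinset = (t.count a).bitIndices.toFinset := by
      ext i
      rw [List.mem_toFinset, List.mem_toFinset, ← pow_mul_mem_gl hs ha, ← pow_mul_mem_gl ht ha, h]
    calc s.count a = ∑ i ∈ (s.count a).bitIndices.toFinset, 2 ^ i :=
          (Finset.twoPowSum_toFinset_bitIndices _).symm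
      _ = ∑ i ∈ (t.count a).bitIndices.toFinset, 2 ^ i := by rw [hfin]
      _ = t.count a := Finset.twoPowSum_toFinset_bitIndices _
  · have h1 : a ∉ s := fun hm => ha (hs a hm)
    have h2 : a ∉ t := fun hm => ha (ht a hm)
    rw [Multiset.count_eq_zero_of_notMem h1, Multiset.count_eq_zero_of_notMem h2]

end GlaisherAux

open GlaisherAux in
theorem distincts_parts_ge_odds_distinct_values (n : ℕ) (hn : 0 < n) :
    ∑ p ∈ Nat.Partition.odds n, p.parts.toFinset.card ≤
      ∑ p ∈ Nat.Partition.distincts n, Multiset.card p.parts := by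
  classical
  have hodd : ∀ p : n.Partition, p ∈ Nat.Partition.odds n → ∀ x ∈ p.parts, Odd x := by
    intro p hp x hx
    rw [Nat.Partition.odds, Nat.Partition.restricted, Finset.mem_filter] at hp
    exact Nat.not_even_iff_odd.mp (hp.2 x hx)
  set Φ : n.Partition → n.Partition := fun p =>
    if h : p ∈ Nat.Partition.odds n then
      ⟨gl p.parts, fun hi => pos_gl (hodd p h) _ hi, by rw [sum_gl]; exact p.parts_sum⟩
    else p with hΦ
  have hΦparts : ∀ p ∈ Nat.Partition.odds n, (Φ p).parts = gl p.parts := by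
    intro p hp; simp [hΦ, hp]
  calc ∑ p ∈ Nat.Partition.odds n, p.parts.toFinset.card
      ≤ ∑ p ∈ Nat.Partition.odds n, Multiset.card (Φ p).parts := by
        refine Finset.sum_le_sum ?_
        intro p hp
        rw [hΦparts p hp]
        exact card_gl p.parts
    _ = ∑ q ∈ (Nat.Partition.odds n).image Φ, Multiset.card q.parts := by
        rw [Finset.sum_image]
        intro p hp p' hp' hpp
        apply Nat.Partition.ext
        exact gl_injOn (hodd p hp) (hodd p' hp')
          (by rw [← hΦparts p hp, ← hΦparts p' hp', hpp])
    _ ≤ ∑ q ∈ Nat.Partition.distincts n, Multiset.card q.parts := by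
        refine Finset.sum_le_sum_of_subset ?_
        intro q hq
        obtain ⟨p, hp, rfl⟩ := Finset.mem_image.mp hq
        rw [Nat.Partition.distincts, Finset.mem_filter]
        refine ⟨Finset.mem_univ _, ?_⟩
        rw [hΦparts p hp]
        exact nodup_gl (hodd p hp)
end

section
/- For all integers d ≥ 2, positive integers n and k, the number of partitions of n having exactly k distinct part values divisible by d equals the number of partitions of n having exactly k distinct part values with multiplicity at least d. -/
open Multiset Finset

namespace FuTang

variable {d : ℕ}

def mapMul (d : ℕ) (S : Finset ℕ) (m : Multiset ℕ) : Multiset ℕ :=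
  (m - S.val) + S.val.bind (fun s => Multiset.replicate d (s / d))

def mapInv (d : ℕ) (S : Finset ℕ) (m : Multiset ℕ) : Multiset ℕ :=
  (m - S.val.bind (fun s => Multiset.replicate d s)) + S.val.bind (fun s => Multiset.replicate 1 (d * s))

lemma count_finset_val {S : Finset ℕ} (v : ℕ) :
    Multiset.count v S.val = if v ∈ S then 1 else 0 := by
  split_ifs with h
  · exact Multiset.count_eq_one_of_mem S.nodup h
  · exact Multiset.count_eq_zero_of_notMem h

lemma count_bind_replicate (c : ℕ) (g : ℕ → ℕ) (S : Finset ℕ) (hg : Set.InjOn g S) (v : ℕ) :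
    Multiset.count v (S.val.bind fun s => Multiset.replicate c (g s)) =
      if v ∈ S.image g then c else 0 := by
  rw [Multiset.count_bind]
  have h2 : (S.val.map fun b => Multiset.count v (Multiset.replicate c (g b))) =
      S.val.map fun b => if g b = v then c else 0 := by
    apply Multiset.map_congr rfl
    intro s _
    rw [Multiset.count_replicate]
  rw [h2]
  have h3 : (S.val.map fun b => if g b = v then c else 0).sum =
      ∑ s ∈ S, if g s = v then c else 0 := rfl
  rw [h3]
  split_ifs with h
  · obtain ⟨s₀, hs₀, rfl⟩ := Finset.mem_image.1 h
    rw [Finset.sum_eq_single_of_mem s₀ hs₀]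
    · simp
    · intro b hb hne
      rw [if_neg]
      intro hEq
      exact hne (hg (by exact_mod_cast hb) (by exact_mod_cast hs₀) hEq)
  · apply Finset.sum_eq_zero
    intro s hs
    rw [if_neg]
    intro hEq
    exact h (Finset.mem_image.2 ⟨s, hs, hEq⟩)

lemma count_mapMul (hd : 0 < d) {S : Finset ℕ} (hS : ∀ s ∈ S, d ∣ s)
    (m : Multiset ℕ) (v : ℕ) :
    Multiset.count v (mapMul d S m) =
      Multiset.count v m - (if v ∈ S then 1 else 0) + (if d * v ∈ S then d else 0) := by
  unfold mapMul
  rw [Multiset.count_add, Multiset.count_sub, count_finset_val,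
    count_bind_replicate d (· / d) S ?_ v]
  · congr 1
    have himg : v ∈ S.image (· / d) ↔ d * v ∈ S := by
      constructor
      · rintro h
        obtain ⟨s, hs, rfl⟩ := Finset.mem_image.1 h
        obtain ⟨t, rfl⟩ := hS s hs
        rwa [Nat.mul_div_cancel_left t hd]
      · intro h
        exact Finset.mem_image.2 ⟨d * v, h, by rw [Nat.mul_div_cancel_left v hd]⟩
    simp [himg]
  · intro a ha b hb hab
    obtain ⟨ta, rfl⟩ := hS a ha
    obtain ⟨tb, rfl⟩ := hS b hb
    simp only [Nat.mul_div_cancel_left _ hd] at hab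
    rw [hab]

lemma count_mapInv (hd : 0 < d) (S : Finset ℕ) (m : Multiset ℕ) (v : ℕ) :
    Multiset.count v (mapInv d S m) =
      Multiset.count v m - (if v ∈ S then d else 0) +
        (if v ∈ S.image (d * ·) then 1 else 0) := by
  unfold mapInv
  have h1 : (S.val.bind fun s => Multiset.replicate d s) =
      S.val.bind fun s => Multiset.replicate d (id s) := rfl
  rw [Multiset.count_add, Multiset.count_sub, h1,
    count_bind_replicate d id S Function.injective_id.injOn v,
    count_bind_replicate 1 (d * ·) S (fun a _ b _ h => Nat.eq_of_mul_eq_mul_left hd h) v]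
  simp

lemma mem_image_div_iff (hd : 0 < d) {S : Finset ℕ} (hS : ∀ s ∈ S, d ∣ s) {v : ℕ} :
    v ∈ S.image (· / d) ↔ d * v ∈ S := by
  constructor
  · intro h
    obtain ⟨s, hs, rfl⟩ := Finset.mem_image.1 h
    obtain ⟨t, rfl⟩ := hS s hs
    rwa [Nat.mul_div_cancel_left t hd]
  · intro h
    exact Finset.mem_image.2 ⟨d * v, h, by rw [Nat.mul_div_cancel_left v hd]⟩

lemma mem_image_mul_iff (hd : 0 < d) {S : Finset ℕ} {v : ℕ} :
    d * v ∈ S.image (d * ·) ↔ v ∈ S := by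
  constructor
  · intro h
    obtain ⟨s, hs, hEq⟩ := Finset.mem_image.1 h
    rwa [← Nat.eq_of_mul_eq_mul_left hd hEq]
  · intro h
    exact Finset.mem_image.2 ⟨v, h, rfl⟩

lemma image_div_mul (hd : 0 < d) {S : Finset ℕ} (hS : ∀ s ∈ S, d ∣ s) :
    (S.image (· / d)).image (d * ·) = S := by
  rw [Finset.image_image]
  have : ∀ s ∈ S, ((d * ·) ∘ (· / d)) s = s := fun s hs => Nat.mul_div_cancel' (hS s hs)
  calc S.image ((d * ·) ∘ (· / d)) = S.image id := Finset.image_congr this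
    _ = S := Finset.image_id

lemma image_mul_div (hd : 0 < d) (S : Finset ℕ) :
    (S.image (d * ·)).image (· / d) = S := by
  rw [Finset.image_image]
  have : ∀ s ∈ S, ((· / d) ∘ (d * ·)) s = s := fun s _ => by
    simp [Nat.mul_div_cancel_left _ hd]
  calc S.image ((· / d) ∘ (d * ·)) = S.image id := Finset.image_congr this
    _ = S := Finset.image_id

lemma card_image_div (hd : 0 < d) {S : Finset ℕ} (hS : ∀ s ∈ S, d ∣ s) :
    (S.image (· / d)).card = S.card := by
  apply Finset.card_image_of_injOn
  intro a ha b hb hab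
  obtain ⟨ta, rfl⟩ := hS a ha
  obtain ⟨tb, rfl⟩ := hS b hb
  simp only [Nat.mul_div_cancel_left _ hd] at hab
  rw [hab]

lemma card_image_mul (hd : 0 < d) (S : Finset ℕ) :
    (S.image (d * ·)).card = S.card :=
  Finset.card_image_of_injective _ (fun _ _ h => Nat.eq_of_mul_eq_mul_left hd h)

lemma sval_le (S : Finset ℕ) (m : Multiset ℕ) (hmem : ∀ s ∈ S, s ∈ m) : S.val ≤ m := by
  rw [Multiset.le_iff_count]
  intro a
  rw [count_finset_val]
  split_ifs with h
  · exact Multiset.one_le_count_iff_mem.2 (hmem a h)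
  · exact Nat.zero_le _

lemma bindrep_le (S : Finset ℕ) (m : Multiset ℕ) (hcnt : ∀ s ∈ S, d ≤ m.count s) :
    (S.val.bind fun s => Multiset.replicate d s) ≤ m := by
  rw [Multiset.le_iff_count]
  intro a
  have h1 : (S.val.bind fun s => Multiset.replicate d s) =
      S.val.bind fun s => Multiset.replicate d (id s) := rfl
  rw [h1, count_bind_replicate d id S Function.injective_id.injOn a]
  simp only [Finset.image_id]
  split_ifs with h
  · exact hcnt a h
  · exact Nat.zero_le _

lemma mapMul_sum (hd : 0 < d) {S : Finset ℕ} (hS : ∀ s ∈ S, d ∣ s) {m : Multiset ℕ}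
    (hmem : ∀ s ∈ S, s ∈ m) : (mapMul d S m).sum = m.sum := by
  have hle : S.val ≤ m := sval_le S m hmem
  have h1 : (m - S.val).sum + S.val.sum = m.sum := by
    rw [← Multiset.sum_add, tsub_add_cancel_of_le hle]
  have h2 : (S.val.bind fun s => Multiset.replicate d (s / d)).sum = S.val.sum := by
    rw [Multiset.sum_bind]
    have : (S.val.map fun s => (Multiset.replicate d (s / d)).sum) = S.val.map id := by
      apply Multiset.map_congr rfl
      intro s hs
      rw [Multiset.sum_replicate, smul_eq_mul, id_eq, Nat.mul_div_cancel' (hS s hs)]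
    rw [this, Multiset.map_id]
  unfold mapMul
  rw [Multiset.sum_add, h2, h1]

lemma mapInv_sum (hd : 0 < d) {S : Finset ℕ} {m : Multiset ℕ}
    (hcnt : ∀ s ∈ S, d ≤ m.count s) : (mapInv d S m).sum = m.sum := by
  have hle := bindrep_le S m hcnt
  have h1 : (m - S.val.bind fun s => Multiset.replicate d s).sum +
      (S.val.bind fun s => Multiset.replicate d s).sum = m.sum := by
    rw [← Multiset.sum_add, tsub_add_cancel_of_le hle]
  have h2 : (S.val.bind fun s => Multiset.replicate 1 (d * s)).sum =
      (S.val.bind fun s => Multiset.replicate d s).sum := by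
    rw [Multiset.sum_bind, Multiset.sum_bind]
    apply congrArg
    apply Multiset.map_congr rfl
    intro s _
    rw [Multiset.sum_replicate, Multiset.sum_replicate, smul_eq_mul, smul_eq_mul, one_mul]
  unfold mapInv
  rw [Multiset.sum_add, h2, h1]

lemma mapMul_pos (hd : 0 < d) {S : Finset ℕ} (hS : ∀ s ∈ S, d ∣ s) {m : Multiset ℕ}
    (hmem : ∀ s ∈ S, s ∈ m)
    (hpos : ∀ x ∈ m, 0 < x) {x : ℕ} (hx : x ∈ mapMul d S m) : 0 < x := by
  unfold mapMul at hx
  rcases Multiset.mem_add.1 hx with h | h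
  · exact hpos x (Multiset.mem_of_le (Multiset.sub_le_self _ _) h)
  · obtain ⟨s, hs, hx'⟩ := Multiset.mem_bind.1 h
    rw [Multiset.eq_of_mem_replicate hx']
    have hsS : s ∈ S := hs
    have hspos : 0 < s := hpos s (hmem s hsS)
    obtain ⟨t, rfl⟩ := hS s hsS
    rw [Nat.mul_div_cancel_left t hd]
    rcases Nat.eq_zero_or_pos t with rfl | ht
    · simp at hspos
    · exact ht

lemma mapInv_pos (hd : 0 < d) {S : Finset ℕ} {m : Multiset ℕ}
    (hmem : ∀ s ∈ S, s ∈ m)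
    (hpos : ∀ x ∈ m, 0 < x) {x : ℕ} (hx : x ∈ mapInv d S m) : 0 < x := by
  unfold mapInv at hx
  rcases Multiset.mem_add.1 hx with h | h
  · exact hpos x (Multiset.mem_of_le (Multiset.sub_le_self _ _) h)
  · obtain ⟨s, hs, hx'⟩ := Multiset.mem_bind.1 h
    rw [Multiset.eq_of_mem_replicate hx']
    have hsS : s ∈ S := hs
    exact Nat.mul_pos hd (hpos s (hmem s hsS))

variable {n : ℕ}

def Aset (d : ℕ) {n : ℕ} (p : n.Partition) : Finset ℕ :=
  p.parts.toFinset.filter fun i => d ∣ i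

def Bset (d : ℕ) {n : ℕ} (p : n.Partition) : Finset ℕ :=
  p.parts.toFinset.filter fun i => d ≤ p.parts.count i

lemma Aset_dvd {p : n.Partition} {S : Finset ℕ} (hsub : S ⊆ Aset d p) :
    ∀ s ∈ S, d ∣ s := fun s hs => (Finset.mem_filter.1 (hsub hs)).2

lemma Aset_mem {p : n.Partition} {S : Finset ℕ} (hsub : S ⊆ Aset d p) :
    ∀ s ∈ S, s ∈ p.parts := fun s hs =>
  Multiset.mem_toFinset.1 (Finset.mem_filter.1 (hsub hs)).1

lemma Bset_cnt {p : n.Partition} {S : Finset ℕ} (hsub : S ⊆ Bset d p) :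
    ∀ s ∈ S, d ≤ p.parts.count s := fun s hs => (Finset.mem_filter.1 (hsub hs)).2

lemma Bset_mem {p : n.Partition} {S : Finset ℕ} (hsub : S ⊆ Bset d p) :
    ∀ s ∈ S, s ∈ p.parts := fun s hs =>
  Multiset.mem_toFinset.1 (Finset.mem_filter.1 (hsub hs)).1

def PhiP (d : ℕ) {n : ℕ} (hd : 0 < d) (p : n.Partition) (S : Finset ℕ)
    (hsub : S ⊆ Aset d p) : n.Partition where
  parts := mapMul d S p.parts
  parts_pos := fun hi =>
    mapMul_pos hd (Aset_dvd hsub) (Aset_mem hsub) (fun x hx => p.parts_pos hx) hi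
  parts_sum := by rw [mapMul_sum hd (Aset_dvd hsub) (Aset_mem hsub), p.parts_sum]

def PsiP (d : ℕ) {n : ℕ} (hd : 0 < d) (p : n.Partition) (S : Finset ℕ)
    (hsub : S ⊆ Bset d p) : n.Partition where
  parts := mapInv d S p.parts
  parts_pos := fun hi =>
    mapInv_pos hd (Bset_mem hsub) (fun x hx => p.parts_pos hx) hi
  parts_sum := by rw [mapInv_sum hd (Bset_cnt hsub), p.parts_sum]

lemma PhiP_mem (hd : 0 < d) {p : n.Partition} {S : Finset ℕ} (hsub : S ⊆ Aset d p) :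
    S.image (· / d) ⊆ Bset d (PhiP d hd p S hsub) := by
  intro v hv
  have hdvd := Aset_dvd hsub
  have hdv : d * v ∈ S := (mem_image_div_iff hd hdvd).1 hv
  have hcv : d ≤ Multiset.count v (mapMul d S p.parts) := by
    rw [count_mapMul hd hdvd]
    split_ifs <;> omega
  have hposd : 0 < d := hd
  refine Finset.mem_filter.2 ⟨Multiset.mem_toFinset.2 ?_, ?_⟩
  · rw [← Multiset.one_le_count_iff_mem]
    show 1 ≤ Multiset.count v (mapMul d S p.parts)
    omega
  · exact hcv

lemma PsiP_mem (hd : 0 < d) {p : n.Partition} {S : Finset ℕ} (hsub : S ⊆ Bset d p) :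
    S.image (d * ·) ⊆ Aset d (PsiP d hd p S hsub) := by
  intro v hv
  obtain ⟨s, hs, rfl⟩ := Finset.mem_image.1 hv
  have hcnt := Bset_cnt hsub
  refine Finset.mem_filter.2 ⟨Multiset.mem_toFinset.2 ?_, ⟨s, rfl⟩⟩
  rw [← Multiset.one_le_count_iff_mem]
  show 1 ≤ Multiset.count (d * s) (mapInv d S p.parts)
  rw [count_mapInv hd]
  have h1 : d * s ∈ S.image (d * ·) := Finset.mem_image.2 ⟨s, hs, rfl⟩
  rw [if_pos h1]
  split_ifs with ha
  · have := hcnt _ ha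
    omega
  · omega

lemma left_inv_parts (hd : 0 < d) {p : n.Partition} {S : Finset ℕ} (hsub : S ⊆ Aset d p) :
    mapInv d (S.image (· / d)) (mapMul d S p.parts) = p.parts := by
  have hdvd := Aset_dvd hsub
  have hmem := Aset_mem hsub
  ext v
  rw [count_mapInv hd, count_mapMul hd hdvd, image_div_mul hd hdvd]
  have h1 : v ∈ S.image (· / d) ↔ d * v ∈ S := mem_image_div_iff hd hdvd
  have h2 : v ∈ S → 1 ≤ Multiset.count v p.parts := fun h =>
    Multiset.one_le_count_iff_mem.2 (hmem v h)
  simp only [h1]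
  split_ifs <;> try omega
  all_goals (have := h2 (by assumption); omega)

lemma right_inv_parts (hd : 0 < d) {p : n.Partition} {S : Finset ℕ} (hsub : S ⊆ Bset d p) :
    mapMul d (S.image (d * ·)) (mapInv d S p.parts) = p.parts := by
  have hcnt := Bset_cnt hsub
  have hdvd : ∀ t ∈ S.image (d * ·), d ∣ t := by
    intro t ht
    obtain ⟨s, _, rfl⟩ := Finset.mem_image.1 ht
    exact ⟨s, rfl⟩
  ext v
  rw [count_mapMul hd hdvd, count_mapInv hd]
  have h1 : d * v ∈ S.image (d * ·) ↔ v ∈ S := mem_image_mul_iff hd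
  have h2 : v ∈ S → d ≤ Multiset.count v p.parts := fun h => hcnt v h
  simp only [h1]
  split_ifs <;> try omega
  all_goals (have := h2 (by assumption); omega)

lemma key (hd : 0 < d) (n k : ℕ) :
    ((Finset.univ : Finset n.Partition).sigma fun p => (Aset d p).powersetCard k).card =
      ((Finset.univ : Finset n.Partition).sigma fun p => (Bset d p).powersetCard k).card := by
  refine Finset.card_bij'
    (fun a ha => ⟨PhiP d hd a.1 a.2
        (Finset.mem_powersetCard.1 (Finset.mem_sigma.1 ha).2).1, a.2.image (· / d)⟩)
    (fun b hb => ⟨PsiP d hd b.1 b.2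
        (Finset.mem_powersetCard.1 (Finset.mem_sigma.1 hb).2).1, b.2.image (d * ·)⟩)
    ?_ ?_ ?_ ?_
  · intro a ha
    have hsub := (Finset.mem_powersetCard.1 (Finset.mem_sigma.1 ha).2).1
    have hcard := (Finset.mem_powersetCard.1 (Finset.mem_sigma.1 ha).2).2
    refine Finset.mem_sigma.2 ⟨Finset.mem_univ _, Finset.mem_powersetCard.2 ⟨?_, ?_⟩⟩
    · exact PhiP_mem hd hsub
    · rw [card_image_div hd (Aset_dvd hsub), hcard]
  · intro b hb
    have hsub := (Finset.mem_powersetCard.1 (Finset.mem_sigma.1 hb).2).1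
    have hcard := (Finset.mem_powersetCard.1 (Finset.mem_sigma.1 hb).2).2
    refine Finset.mem_sigma.2 ⟨Finset.mem_univ _, Finset.mem_powersetCard.2 ⟨?_, ?_⟩⟩
    · exact PsiP_mem hd hsub
    · rw [card_image_mul hd, hcard]
  · intro a ha
    have hsub := (Finset.mem_powersetCard.1 (Finset.mem_sigma.1 ha).2).1
    have hp : PsiP d hd (PhiP d hd a.1 a.2 hsub) (a.2.image (· / d)) (PhiP_mem hd hsub)
        = a.1 := by
      apply Nat.Partition.ext
      exact left_inv_parts hd hsub
    have hs : (a.2.image (· / d)).image (d * ·) = a.2 := image_div_mul hd (Aset_dvd hsub)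
    exact Sigma.ext hp (heq_of_eq_of_heq hs (HEq.refl _))
  · intro b hb
    have hsub := (Finset.mem_powersetCard.1 (Finset.mem_sigma.1 hb).2).1
    have hp : PhiP d hd (PsiP d hd b.1 b.2 hsub) (b.2.image (d * ·)) (PsiP_mem hd hsub)
        = b.1 := by
      apply Nat.Partition.ext
      exact right_inv_parts hd hsub
    have hs : (b.2.image (d * ·)).image (· / d) = b.2 := image_mul_div hd b.2
    exact Sigma.ext hp (heq_of_eq_of_heq hs (HEq.refl _))

lemma sum_choose_eq (hd : 0 < d) (n k : ℕ) :
    ∑ p : n.Partition, ((Aset d p).card).choose k =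
      ∑ p : n.Partition, ((Bset d p).card).choose k := by
  have h := key hd n k
  rwa [Finset.card_sigma, Finset.card_sigma,
    Finset.sum_congr rfl (fun p _ => Finset.card_powersetCard k (Aset d p)),
    Finset.sum_congr rfl (fun p _ => Finset.card_powersetCard k (Bset d p))] at h

lemma expand {α : Type*} [Fintype α] [DecidableEq α] (c : α → ℕ) (M k : ℕ)
    (hc : ∀ x, c x ≤ M) :
    ∑ x, (c x).choose k =
      (Finset.univ.filter fun x => c x = k).card +
        ∑ j ∈ Finset.Ioc k M, j.choose k * (Finset.univ.filter fun x => c x = j).card := by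
  have h1 : ∀ j, j.choose k * (Finset.univ.filter fun x => c x = j).card =
      ∑ x, if c x = j then j.choose k else 0 := by
    intro j
    rw [Finset.card_filter, Finset.mul_sum]
    apply Finset.sum_congr rfl
    intro x _
    rw [mul_ite, mul_one, mul_zero]
  rw [Finset.sum_congr rfl (fun j _ => h1 j), Finset.sum_comm, Finset.card_filter,
    ← Finset.sum_add_distrib]
  apply Finset.sum_congr rfl
  intro x _
  rw [Finset.sum_ite_eq (Finset.Ioc k M) (c x) (fun j => j.choose k)]
  rcases lt_trichotomy (c x) k with h | h | h
  · have hmem : c x ∉ Finset.Ioc k M := by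
      simp only [Finset.mem_Ioc, not_and]
      omega
    rw [Nat.choose_eq_zero_of_lt h, if_neg (by omega), if_neg hmem]
    omega
  · have hmem : k ∉ Finset.Ioc k M := by
      simp [Finset.mem_Ioc]
    rw [h, if_pos rfl, if_neg hmem, Nat.choose_self]
    omega
  · rw [if_neg (by omega), if_pos (Finset.mem_Ioc.2 ⟨h, hc x⟩)]
    omega

lemma invert {α : Type*} [Fintype α] [DecidableEq α] (a b : α → ℕ) (M : ℕ)
    (ha : ∀ x, a x ≤ M) (hb : ∀ x, b x ≤ M)
    (h : ∀ k, ∑ x, (a x).choose k = ∑ x, (b x).choose k) (k : ℕ) :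
    (Finset.univ.filter fun x => a x = k).card =
      (Finset.univ.filter fun x => b x = k).card := by
  suffices H : ∀ t k', M ≤ k' + t →
      (Finset.univ.filter fun x => a x = k').card =
        (Finset.univ.filter fun x => b x = k').card by
    exact H M k (by omega)
  intro t
  induction t with
  | zero =>
    intro k' hk'
    have hIoc : Finset.Ioc k' M = ∅ := Finset.Ioc_eq_empty (by omega)
    have ea := expand a M k' ha
    have eb := expand b M k' hb
    rw [hIoc, Finset.sum_empty] at ea eb
    have := h k'
    omega
  | succ t ih =>
    intro k' hk'
    by_cases h' : M ≤ k' + t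
    · exact ih k' h'
    have hsum : ∑ j ∈ Finset.Ioc k' M, j.choose k' *
          (Finset.univ.filter fun x => a x = j).card =
        ∑ j ∈ Finset.Ioc k' M, j.choose k' *
          (Finset.univ.filter fun x => b x = j).card := by
      apply Finset.sum_congr rfl
      intro j hj
      have := Finset.mem_Ioc.1 hj
      rw [ih j (by omega)]
    have ea := expand a M k' ha
    have eb := expand b M k' hb
    have := h k'
    omega

lemma Aset_card_le {n : ℕ} (p : n.Partition) : (Aset d p).card ≤ n := by
  have h1 : (Aset d p).card ≤ p.parts.toFinset.card := Finset.card_filter_le _ _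
  have h2 : p.parts.toFinset.card ≤ Multiset.card p.parts := Multiset.toFinset_card_le _
  have h3 : Multiset.card p.parts ≤ p.parts.sum := by
    have := Multiset.card_nsmul_le_sum (s := p.parts) (a := 1)
      (fun x hx => p.parts_pos hx)
    simpa using this
  rw [p.parts_sum] at h3
  omega

lemma Bset_card_le {n : ℕ} (p : n.Partition) : (Bset d p).card ≤ n := by
  have h1 : (Bset d p).card ≤ p.parts.toFinset.card := Finset.card_filter_le _ _
  have h2 : p.parts.toFinset.card ≤ Multiset.card p.parts := Multiset.toFinset_card_le _
  have h3 : Multiset.card p.parts ≤ p.parts.sum := by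
    have := Multiset.card_nsmul_le_sum (s := p.parts) (a := 1)
      (fun x hx => p.parts_pos hx)
    simpa using this
  rw [p.parts_sum] at h3
  omega

end FuTang

open scoped Classical in
theorem div_values_eq_high_multiplicity_values (d n k : ℕ)
    (hd : 2 ≤ d) (hn : 0 < n) (hk : 0 < k) :
    (Finset.univ.filter fun p : n.Partition =>
        (p.parts.toFinset.filter fun i => d ∣ i).card = k).card =
      (Finset.univ.filter fun p : n.Partition =>
        (p.parts.toFinset.filter fun i => d ≤ p.parts.count i).card = k).card := by
  have hd' : 0 < d := by omega
  have h := FuTang.invert (fun p : n.Partition => (FuTang.Aset d p).card)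
    (fun p : n.Partition => (FuTang.Bset d p).card) n
    (fun p => FuTang.Aset_card_le p) (fun p => FuTang.Bset_card_le p)
    (fun k' => FuTang.sum_choose_eq hd' n k') k
  simp only [FuTang.Aset, FuTang.Bset] at h
  convert h using 2 <;> rfl
end
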